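/- arXiv:1605.06460 — 6 statements merged into one kernel-verified Lean document; each statement's English description precedes it below -/
import Mathlib

section
/- Let E be a meet-semilattice with least element 0, let y ∈ E, and let F be an ultrafilter in E. Then the set J := {x ∧ y : x ∈ F} is an ultrafilter in the meet-semilattice ↓y := {z ∈ E : z ≤ y} if and only if y ∈ F. -/
/-- A filter in the sub-poset `P` of a meet-semilattice with least element `0 = ⊥`:
nonempty, upward-closed within `P`, closed under binary meets, not containing `⊥`. -/
def IsFilterWithin {E : Type*} [SemilatticeInf E] [OrderBot E] (P F : Set E) : Prop :=
  F ⊆ P ∧ F.Nonempty ∧ ⊥ ∉ F ∧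
    (∀ x ∈ F, ∀ y ∈ P, x ≤ y → y ∈ F) ∧
    (∀ x ∈ F, ∀ y ∈ F, x ⊓ y ∈ F)

/-- An ultrafilter in `P` is a maximal filter in `P`. -/
def IsUltrafilterWithin {E : Type*} [SemilatticeInf E] [OrderBot E] (P F : Set E) : Prop :=
  IsFilterWithin P F ∧ ∀ G : Set E, IsFilterWithin P G → F ⊆ G → G = F

/-- Lemma: for an ultrafilter `F` in `E` and `y ∈ E`, the set `J = {x ⊓ y : x ∈ F}`
is an ultrafilter in `↓y = {z : z ≤ y}` if and only if `y ∈ F`. -/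
theorem cutdown_ultrafilter_iff {E : Type*} [SemilatticeInf E] [OrderBot E]
    (y : E) (F : Set E) (hF : IsUltrafilterWithin Set.univ F) :
    IsUltrafilterWithin (Set.Iic y) {z | ∃ x ∈ F, z = x ⊓ y} ↔ y ∈ F := by
  obtain ⟨⟨_, hFne, hFbot, hFup, hFmeet⟩, hFmax⟩ := hF
  set J : Set E := {z | ∃ x ∈ F, z = x ⊓ y} with hJdef
  constructor
  · rintro ⟨⟨hJsub, hJne, hJbot, hJup, hJmeet⟩, hJmax⟩
    set F' : Set E := {w | ∃ x ∈ F, x ⊓ y ≤ w} with hF'def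
    have hF'filt : IsFilterWithin Set.univ F' := by
      refine ⟨Set.subset_univ _, ?_, ?_, ?_, ?_⟩
      · obtain ⟨x, hx⟩ := hFne; exact ⟨x, x, hx, inf_le_left⟩
      · rintro ⟨x, hx, hle⟩
        exact hJbot (by exact ⟨x, hx, (le_bot_iff.mp hle).symm⟩)
      · rintro w ⟨x, hx, hle⟩ v _ hwv; exact ⟨x, hx, hle.trans hwv⟩
      · rintro w ⟨x, hx, hle⟩ v ⟨x', hx', hle'⟩
        refine ⟨x ⊓ x', hFmeet x hx x' hx', ?_⟩
        calc x ⊓ x' ⊓ y = (x ⊓ y) ⊓ (x' ⊓ y) := by rw [inf_inf_inf_comm, inf_idem]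
          _ ≤ w ⊓ v := inf_le_inf hle hle'
    have hFF' : F ⊆ F' := fun x hx => ⟨x, hx, inf_le_left⟩
    have heq := hFmax F' hF'filt hFF'
    rw [← heq]
    obtain ⟨x, hx⟩ := hFne
    exact ⟨x, hx, inf_le_right⟩
  · intro hy
    have hJF : J ⊆ F := by
      rintro z ⟨x, hx, rfl⟩; exact hFmeet x hx y hy
    have hJsub : J ⊆ Set.Iic y := by
      rintro z ⟨x, hx, rfl⟩; exact inf_le_right
    have hJfilt : IsFilterWithin (Set.Iic y) J := by
      refine ⟨hJsub, ⟨y, y, hy, (inf_idem y).symm⟩, ?_, ?_, ?_⟩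
      · intro hb; exact hFbot (hJF hb)
      · rintro z hz w hw hzw
        have hwF : w ∈ F := hFup z (hJF hz) w (Set.mem_univ _) hzw
        exact ⟨w, hwF, (inf_eq_left.mpr hw).symm⟩
      · rintro z ⟨x, hx, rfl⟩ w ⟨x', hx', rfl⟩
        refine ⟨x ⊓ x', hFmeet x hx x' hx', ?_⟩
        rw [inf_inf_inf_comm, inf_idem]
    refine ⟨hJfilt, ?_⟩
    rintro G ⟨hGsub, hGne, hGbot, hGup, hGmeet⟩ hJG
    set G' : Set E := {w | ∃ g ∈ G, g ≤ w} with hG'def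
    have hG'filt : IsFilterWithin Set.univ G' := by
      refine ⟨Set.subset_univ _, ?_, ?_, ?_, ?_⟩
      · obtain ⟨g, hg⟩ := hGne; exact ⟨g, g, hg, le_rfl⟩
      · rintro ⟨g, hg, hle⟩
        rw [le_bot_iff.mp hle] at hg; exact hGbot hg
      · rintro w ⟨g, hg, hle⟩ v _ hwv; exact ⟨g, hg, hle.trans hwv⟩
      · rintro w ⟨g, hg, hle⟩ v ⟨g', hg', hle'⟩
        exact ⟨g ⊓ g', hGmeet g hg g' hg', inf_le_inf hle hle'⟩
    have hFG' : F ⊆ G' := by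
      intro x hx
      exact ⟨x ⊓ y, hJG ⟨x, hx, rfl⟩, inf_le_left⟩
    have heq := hFmax G' hG'filt hFG'
    apply Set.Subset.antisymm _ hJG
    intro g hg
    have hgF : g ∈ F := heq ▸ ⟨g, hg, le_rfl⟩
    exact ⟨g, hgF, (inf_eq_left.mpr (hGsub hg)).symm⟩
end

section
/- Let (E,ℒ,ℬ) be a labelled space, let α be a nonempty finite labelled path and β ∈ ℒ*(E) be such that αβ is a labelled path, and let F ∈ X_β. Then J := {C ∩ r(αβ) : C ∈ F} is an ultrafilter in ℬ_{αβ} if and only if r(αβ) ∈ F. -/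
open Set

/-- A filter in the sub-poset `P` of a powerset, ordered by inclusion, with least
element `∅`: nonempty, upward-closed within `P`, downward-directed, not containing `∅`. -/
def IsFilterIn {V : Type*} (P F : Set (Set V)) : Prop :=
  F ⊆ P ∧ F.Nonempty ∧ ∅ ∉ F ∧
    (∀ X ∈ F, ∀ Y ∈ P, X ⊆ Y → Y ∈ F) ∧
    (∀ X ∈ F, ∀ Y ∈ F, ∃ Z ∈ F, Z ⊆ X ∧ Z ⊆ Y)

/-- An ultrafilter in `P` is a maximal filter in `P`. -/
def IsUltrafilterIn {V : Type*} (P F : Set (Set V)) : Prop :=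
  IsFilterIn P F ∧ ∀ G : Set (Set V), IsFilterIn P G → F ⊆ G → G = F

/-- A labelled graph: a directed graph with source, range and a surjective labelling map. -/
structure LGraph (V Edg A : Type*) where
  src : Edg → V
  rng : Edg → V
  lbl : Edg → A
  lbl_surj : Function.Surjective lbl

namespace LGraph

variable {V Edg A : Type*} (G : LGraph V Edg A)

/-- A finite path: a list of composable edges. -/
def IsPath (p : List Edg) : Prop := p.Chain' fun e f => G.rng e = G.src f

/-- The relative range `r(S, α)`, with the convention `r(S, ω) = S`. -/
def relR (S : Set V) : List A → Set V
  | [] => S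
  | a :: w =>
      {v | ∃ p : List Edg, G.IsPath p ∧ p.map G.lbl = a :: w ∧
        ∃ h : p ≠ [], G.src (p.head h) ∈ S ∧ G.rng (p.getLast h) = v}

/-- `α ∈ ℒ*(E)` : a finite labelled path (including the empty word). -/
def IsLbl (α : List A) : Prop := ∃ p : List Edg, G.IsPath p ∧ p.map G.lbl = α

/-- An infinite labelled path. -/
def IsLblInf (α : ℕ → A) : Prop :=
  ∃ p : ℕ → Edg, (∀ n, G.rng (p n) = G.src (p (n + 1))) ∧ ∀ n, G.lbl (p n) = α n

end LGraph

/-- A labelled space: a labelled graph together with an accommodating family `ℬ`. -/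
structure LabelledSpace (V Edg A : Type*) extends LGraph V Edg A where
  ℬ : Set (Set V)
  inter_mem : ∀ ⦃X Y : Set V⦄, X ∈ ℬ → Y ∈ ℬ → X ∩ Y ∈ ℬ
  union_mem : ∀ ⦃X Y : Set V⦄, X ∈ ℬ → Y ∈ ℬ → X ∪ Y ∈ ℬ
  range_mem : ∀ α : List A, α ≠ [] → toLGraph.IsLbl α → toLGraph.relR Set.univ α ∈ ℬ
  relR_mem : ∀ ⦃X : Set V⦄, X ∈ ℬ → ∀ α : List A, toLGraph.IsLbl α → toLGraph.relR X α ∈ ℬ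

/-- Words of length `≤ ∞`: finite words are lists, infinite words are sequences. -/
abbrev LWord (A : Type*) := List A ⊕ (ℕ → A)

/-- The length of a word in `ℕ∞`. -/
def wlen {A : Type*} : LWord A → ℕ∞
  | .inl l => (l.length : ℕ∞)
  | .inr _ => (⊤ : ℕ∞)

/-- `α_{1,n}` : the initial subword of length `n`. -/
def wtake {A : Type*} : LWord A → ℕ → List A
  | .inl l, n => l.take n
  | .inr f, n => (List.range n).map f

/-- Concatenation of a finite word with a word. -/
def wappend {A : Type*} (α : List A) : LWord A → LWord A
  | .inl l => .inl (α ++ l)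
  | .inr f => .inr fun n => if h : n < α.length then α.get ⟨n, h⟩ else f (n - α.length)

namespace LabelledSpace

variable {V Edg A : Type*} (L : LabelledSpace V Edg A)

abbrev relR : Set V → List A → Set V := L.toLGraph.relR

abbrev IsLbl : List A → Prop := L.toLGraph.IsLbl

/-- `r(α)` : the range of a word. -/
def wr (α : List A) : Set V := L.relR Set.univ α

/-- Membership in `ℒ^{≤∞}(E)`. -/
def IsLWord : LWord A → Prop
  | .inl l => L.IsLbl l
  | .inr f => L.toLGraph.IsLblInf f

/-- Weakly left-resolving. -/
def WeaklyLeftResolving : Prop :=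
  ∀ ⦃X Y : Set V⦄, X ∈ L.ℬ → Y ∈ L.ℬ → ∀ α : List A, α ≠ [] →
    L.relR (X ∩ Y) α = L.relR X α ∩ L.relR Y α

/-- `ℬ` is closed under relative complements. -/
def ClosedUnderRelComplements : Prop :=
  ∀ ⦃X Y : Set V⦄, X ∈ L.ℬ → Y ∈ L.ℬ → X \ Y ∈ L.ℬ

/-- `ℬ_α = {A ∈ ℬ : A ⊆ r(α)}`. -/
def Bw (α : List A) : Set (Set V) := {X | X ∈ L.ℬ ∧ X ⊆ L.wr α}

/-- `X_α` : the set of ultrafilters in `ℬ_α`. -/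
def Xw (α : List A) : Set (Set (Set V)) := {F | IsUltrafilterIn (L.Bw α) F}

/-- `X_{(α)β} = {F ∈ X_β : r(αβ) ∈ F}`, with the convention `X_{(ω)β} = X_β`. -/
def XP (α β : List A) : Set (Set (Set V)) :=
  match α with
  | [] => L.Xw β
  | a :: l => {F | F ∈ L.Xw β ∧ L.wr ((a :: l) ++ β) ∈ F}

/-- `g_{(α)β}(F) = {C ∩ r(αβ) : C ∈ F}`. -/
def gmap (α β : List A) (F : Set (Set V)) : Set (Set V) :=
  {D | ∃ C ∈ F, D = C ∩ L.wr (α ++ β)}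

/-- `h_{[α]β}(F)` : the upward closure of `F` in `ℬ_β` (only depends on `β`). -/
def hmap (β : List A) (F : Set (Set V)) : Set (Set V) :=
  {D | D ∈ L.Bw β ∧ ∃ C ∈ F, C ⊆ D}

/-- `f_{β[γ]}(F) = {A ∈ ℬ_β : r(A,γ) ∈ F}`. -/
def fmap (β γ : List A) (F : Set (Set V)) : Set (Set V) :=
  {X | X ∈ L.Bw β ∧ L.relR X γ ∈ F}

/-- `X_α^{sink}`. -/
def Xsink (α : List A) : Set (Set (Set V)) :=
  {F | F ∈ L.Xw α ∧ ∀ b : A, ∃ X ∈ F, L.relR X [b] = ∅}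

/-- A complete family (of filters) for the word `w`. -/
def IsCompleteFamily (w : LWord A) (F : ℕ → Set (Set V)) : Prop :=
  (∀ n : ℕ, 0 < n → (n : ℕ∞) ≤ wlen w → IsFilterIn (L.Bw (wtake w n)) (F n)) ∧
  (IsFilterIn (L.Bw []) (F 0) ∨ F 0 = ∅) ∧
  ∀ n : ℕ, (n : ℕ∞) < wlen w →
    F n = {X | X ∈ L.Bw (wtake w n) ∧ L.relR X ((wtake w (n + 1)).drop n) ∈ F (n + 1)}

/-- A complete family of ultrafilters for the word `w`. -/
def IsCompleteUltraFamily (w : LWord A) (F : ℕ → Set (Set V)) : Prop :=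
  (∀ n : ℕ, 0 < n → (n : ℕ∞) ≤ wlen w → IsUltrafilterIn (L.Bw (wtake w n)) (F n)) ∧
  (IsUltrafilterIn (L.Bw []) (F 0) ∨ F 0 = ∅) ∧
  ∀ n : ℕ, (n : ℕ∞) < wlen w →
    F n = {X | X ∈ L.Bw (wtake w n) ∧ L.relR X ((wtake w (n + 1)).drop n) ∈ F (n + 1)}

/-- Membership in `E(S)`: `none` is the zero element, `some (α, X)` stands for `(α, X, α)`. -/
def ESmem : Option (List A × Set V) → Prop
  | none => True
  | some p => p.2 ∈ L.Bw p.1 ∧ p.2 ≠ ∅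

/-- `E(S) ∖ {0}`. -/
def ESnz : Set (Option (List A × Set V)) := {p | L.ESmem p ∧ p ≠ none}

/-- The natural order on `E(S)`: `(α,A,α) ≤ (β,B,β)` iff `α = βα'` and `A ⊆ r(B,α')`. -/
def ESle : Option (List A × Set V) → Option (List A × Set V) → Prop
  | none, _ => True
  | some _, none => False
  | some p, some q => ∃ γ : List A, p.1 = q.1 ++ γ ∧ p.2 ⊆ L.relR q.2 γ

open Classical in
/-- The product in the semilattice `E(S)`. -/
noncomputable def ESmul :
    Option (List A × Set V) → Option (List A × Set V) → Option (List A × Set V)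
  | none, _ => none
  | some _, none => none
  | some p, some q =>
    if p.1 <+: q.1 then
      if L.relR p.2 (q.1.drop p.1.length) ∩ q.2 = ∅ then none
      else some (q.1, L.relR p.2 (q.1.drop p.1.length) ∩ q.2)
    else if q.1 <+: p.1 then
      if p.2 ∩ L.relR q.2 (p.1.drop q.1.length) = ∅ then none
      else some (p.1, p.2 ∩ L.relR q.2 (p.1.drop q.1.length))
    else none

/-- A filter in `E(S)`. -/
def IsESFilter (ξ : Set (Option (List A × Set V))) : Prop :=
  ξ ⊆ L.ESnz ∧ ξ.Nonempty ∧
    (∀ p ∈ ξ, ∀ q, L.ESmem q → L.ESle p q → q ∈ ξ) ∧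
    (∀ p ∈ ξ, ∀ q ∈ ξ, ∃ z ∈ ξ, L.ESle z p ∧ L.ESle z q)

/-- `Z` is a cover for `x` in `E(S)`. -/
def ESCover (x : Option (List A × Set V)) (Z : Set (Option (List A × Set V))) : Prop :=
  (∀ z ∈ Z, L.ESmem z ∧ L.ESle z x) ∧
  ∀ y, L.ESmem y → y ≠ none → L.ESle y x → ∃ z ∈ Z, L.ESmul y z ≠ none

/-- A tight filter in `E(S)`: every finite cover of an element of the filter meets the filter. -/
def IsTightESFilter (ξ : Set (Option (List A × Set V))) : Prop :=
  L.IsESFilter ξ ∧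
    ∀ x ∈ ξ, ∀ Z : Set (Option (List A × Set V)), Z.Finite → L.ESCover x Z →
      (Z ∩ ξ).Nonempty

/-- The filter in `E(S)` associated with the pair `(w, F)` of a word together with a
(complete) family: `ξ = ⋃_n ⋃_{X ∈ F n} ↑(w_{1,n}, X)`. -/
def filterOf (w : LWord A) (F : ℕ → Set (Set V)) : Set (Option (List A × Set V)) :=
  {p | L.ESmem p ∧
    ∃ n : ℕ, (n : ℕ∞) ≤ wlen w ∧ ∃ X ∈ F n, L.ESle (some (wtake w n, X)) p}

/-- `ξ_n = {X : (w_{1,n}, X, w_{1,n}) ∈ ξ}`. -/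
def xiN (_L : LabelledSpace V Edg A) (w : LWord A) (ξ : Set (Option (List A × Set V)))
    (n : ℕ) : Set (Set V) :=
  {X | some (wtake w n, X) ∈ ξ}

/-- `T_w` : the tight filters in `E(S)` whose associated word is `w`. -/
def Tw (w : LWord A) : Set (Set (Option (List A × Set V))) :=
  {ξ | L.IsTightESFilter ξ ∧
    ∃ F : ℕ → Set (Set V), L.IsCompleteFamily w F ∧ ξ = L.filterOf w F}

/-- `T_{(α)w} = {ξ ∈ T_w : ξ₀ is an ultrafilter in ℬ with r(α) ∈ ξ₀}`, with
`T_{(ω)w} = T_w`. -/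
def TwP (α : List A) (w : LWord A) : Set (Set (Option (List A × Set V))) :=
  match α with
  | [] => L.Tw w
  | a :: l =>
    {ξ | ξ ∈ L.Tw w ∧ IsUltrafilterIn (L.Bw []) (L.xiN w ξ 0) ∧ L.wr (a :: l) ∈ L.xiN w ξ 0}

/-- The family `{J_i}` for `αw` built from a family `{F_n}` for `w`:
`J_{|α|+n} = g_{(α)w_{1,n}}(F_n)` for `1 ≤ n ≤ |w|` and
`J_i = f_{α_{1,i}[α_{i+1,|α|}w₁]}(J_{|α|+1})` for `0 ≤ i ≤ |α|`
(reading `J_{|α|} = g_{(α)ω}(F₀)` and `J_i = f_{α_{1,i}[α_{i+1,|α|}]}(J_{|α|})` when `w = ω`). -/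
def Jfamily (α : List A) (w : LWord A) (F : ℕ → Set (Set V)) : ℕ → Set (Set V) :=
  match w with
  | .inl [] => fun i =>
      if i < α.length then L.fmap (α.take i) (α.drop i) (L.gmap α [] (F 0))
      else L.gmap α [] (F 0)
  | w => fun i =>
      if i ≤ α.length then
        L.fmap (α.take i) (α.drop i ++ wtake w 1) (L.gmap α (wtake w 1) (F 1))
      else L.gmap α (wtake w (i - α.length)) (F (i - α.length))

/-- `G_{(α)w}` as an operation on filters in `E(S)`. -/
def Gmap (α : List A) (w : LWord A) (ξ : Set (Option (List A × Set V))) :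
    Set (Option (List A × Set V)) :=
  L.filterOf (wappend α w) (L.Jfamily α w (L.xiN w ξ))

/-- The family `{η_n}` for `w` built from a family for `αw`:
`η_n = h_{[α]w_{1,n}}(F_{|α|+n})`. -/
def Hfam (α : List A) (w : LWord A) (F : ℕ → Set (Set V)) : ℕ → Set (Set V) :=
  fun n => L.hmap (wtake w n) (F (α.length + n))

/-- `H_{[α]w}` as an operation on filters in `E(S)`. -/
def Hmap (α : List A) (w : LWord A) (ξ : Set (Option (List A × Set V))) :
    Set (Option (List A × Set V)) :=
  L.filterOf w (L.Hfam α w (L.xiN (wappend α w) ξ))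

end LabelledSpace

/-- The topology of pointwise convergence on sets of subsets of `V`
(product topology with discrete coordinates, via indicator functions). -/
def memTopology (V : Type*) : TopologicalSpace (Set (Set V)) :=
  show TopologicalSpace (Set V → Prop) from
    @Pi.topologicalSpace (Set V) (fun _ => Prop) (fun _ => ⊥)


section
variable {V Edg A : Type*} (L : LabelledSpace V Edg A)

/-- `r(αβ) ⊆ r(β)` for nonempty `α`. -/
theorem wr_append_subset (α β : List A) (hα : α ≠ []) :
    L.wr (α ++ β) ⊆ L.wr β := by
  obtain ⟨a, l, rfl⟩ := List.exists_cons_of_ne_nil hα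
  cases β with
  | nil =>
    intro v _
    simp [LabelledSpace.wr, LGraph.relR]
  | cons b w =>
    intro v hv
    obtain ⟨p, hpath, hmap, hne, -, hlast⟩ := hv
    set n := (a :: l).length with hn
    set q := p.drop n with hq
    have hmapq : q.map L.toLGraph.lbl = b :: w := by
      rw [hq, List.map_drop, hmap]
      exact List.drop_left
    have hqne : q ≠ [] := by
      intro h
      rw [h] at hmapq
      simp at hmapq
    refine ⟨q, hpath.drop n, hmapq, hqne, trivial, ?_⟩
    -- `getLast q = getLast p`
    have h1 := List.getLast?_eq_getLast_of_ne_nil hne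
    have h2 := List.getLast?_eq_getLast_of_ne_nil hqne
    have h3 : p.getLast? = q.getLast? := by
      conv_lhs => rw [← List.take_append_drop n p]
      exact List.getLast?_append_of_ne_nil _ hqne
    rw [h3, h2] at h1
    rw [Option.some.inj h1]
    exact hlast

/-- `{C ∩ r(αβ) : C ∈ F}` is an ultrafilter in `ℬ_{αβ}` iff `r(αβ) ∈ F`. -/
theorem gmap_mem_Xw_iff (α β : List A) (hα : α ≠ []) (hαl : L.IsLbl α)
    (hβ : L.IsLbl β) (hαβ : L.IsLbl (α ++ β))
    (F : Set (Set V)) (hF : F ∈ L.Xw β) :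
    L.gmap α β F ∈ L.Xw (α ++ β) ↔ L.wr (α ++ β) ∈ F := by
  obtain ⟨⟨hFsub, hFne, hFns, hFup, hFdir⟩, hFmax⟩ := hF
  set r := L.wr (α ++ β) with hr_def
  have hrB : r ∈ L.ℬ := L.range_mem (α ++ β) (by simp [hα]) hαβ
  have hrsub : r ⊆ L.wr β := wr_append_subset L α β hα
  have hrBw : r ∈ L.Bw β := ⟨hrB, hrsub⟩
  have hBwsub : ∀ X ∈ L.Bw β, X ∈ L.ℬ ∧ X ⊆ L.wr β := fun X hX => hX
  have hBw' : ∀ X ∈ L.Bw (α ++ β), X ∈ L.Bw β := fun X hX =>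
    ⟨hX.1, hX.2.trans hrsub⟩
  constructor
  · -- ultrafilter ⟹ r(αβ) ∈ F
    rintro ⟨⟨-, -, hJns, -, -⟩, -⟩
    have hmeet : ∀ C ∈ F, C ∩ r ≠ ∅ := by
      intro C hC h
      exact hJns ⟨C, hC, h.symm⟩
    -- the filter generated by F together with r
    set F' : Set (Set V) := {D | D ∈ L.Bw β ∧ ∃ C ∈ F, C ∩ r ⊆ D} with hF'def
    have hFF' : F ⊆ F' := fun C hC => ⟨hFsub hC, C, hC, Set.inter_subset_left⟩
    have hfilt : IsFilterIn (L.Bw β) F' := by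
      refine ⟨fun D hD => hD.1, hFne.imp hFF', ?_, ?_, ?_⟩
      · rintro ⟨-, C, hC, hsub⟩
        exact hmeet C hC (Set.subset_empty_iff.mp hsub)
      · rintro X ⟨-, C, hC, hsub⟩ Y hY hXY
        exact ⟨hY, C, hC, hsub.trans hXY⟩
      · rintro X ⟨hX1, C, hC, hCX⟩ Y ⟨hY1, C', hC', hCY⟩
        obtain ⟨Z, hZ, hZC, hZC'⟩ := hFdir C hC C' hC'
        refine ⟨Z ∩ r, ⟨⟨L.inter_mem (hFsub hZ).1 hrB,
          Set.inter_subset_right.trans hrsub⟩, Z, hZ, subset_rfl⟩,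
          ?_, ?_⟩
        · exact (Set.inter_subset_inter_left r hZC).trans hCX
        · exact (Set.inter_subset_inter_left r hZC').trans hCY
    have := hFmax F' hfilt hFF'
    rw [← this]
    obtain ⟨C, hC⟩ := hFne
    exact ⟨hrBw, C, hC, Set.inter_subset_right⟩
  · -- r(αβ) ∈ F ⟹ ultrafilter
    intro hr
    have hJsub : L.gmap α β F ⊆ L.Bw (α ++ β) := by
      rintro D ⟨C, hC, rfl⟩
      exact ⟨L.inter_mem (hFsub hC).1 hrB, Set.inter_subset_right⟩
    refine ⟨⟨hJsub, ?_, ?_, ?_, ?_⟩, ?_⟩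
    · obtain ⟨C, hC⟩ := hFne
      exact ⟨C ∩ r, C, hC, rfl⟩
    · rintro ⟨C, hC, hCr⟩
      obtain ⟨Z, hZ, hZC, hZr⟩ := hFdir C hC r hr
      have : Z = ∅ := Set.subset_empty_iff.mp
        (by rw [hCr]; exact Set.subset_inter hZC hZr)
      exact hFns (this ▸ hZ)
    · rintro X ⟨C, hC, rfl⟩ Y hY hXY
      have hYr : Y ⊆ r := hY.2
      have hCY : C ∪ Y ∈ F := by
        refine hFup C hC (C ∪ Y) ⟨L.union_mem (hFsub hC).1 hY.1,
          Set.union_subset (hFsub hC).2 (hYr.trans hrsub)⟩ Set.subset_union_left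
      refine ⟨C ∪ Y, hCY, ?_⟩
      rw [Set.union_inter_distrib_right, Set.inter_eq_left.mpr hYr,
        Set.union_eq_right.mpr hXY]
    · rintro X ⟨C, hC, rfl⟩ Y ⟨C', hC', rfl⟩
      obtain ⟨Z, hZ, hZC, hZC'⟩ := hFdir C hC C' hC'
      exact ⟨Z ∩ r, ⟨Z, hZ, rfl⟩, Set.inter_subset_inter_left r hZC,
        Set.inter_subset_inter_left r hZC'⟩
    · -- maximality
      intro G hG hJG
      obtain ⟨hGsub, hGne, hGns, hGup, hGdir⟩ := hG
      refine Set.Subset.antisymm ?_ hJG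
      -- the upward closure of G in ℬ_β equals F
      set G' : Set (Set V) := {D | D ∈ L.Bw β ∧ ∃ Y ∈ G, Y ⊆ D} with hG'def
      have hGG' : ∀ Y ∈ G, Y ∈ G' := fun Y hY =>
        ⟨hBw' Y (hGsub hY), Y, hY, subset_rfl⟩
      have hFG' : F ⊆ G' := by
        intro C hC
        refine ⟨hFsub hC, C ∩ r, hJG ⟨C, hC, rfl⟩, Set.inter_subset_left⟩
      have hfilt : IsFilterIn (L.Bw β) G' := by
        refine ⟨fun D hD => hD.1, hGne.imp hGG', ?_, ?_, ?_⟩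
        · rintro ⟨-, Y, hY, hsub⟩
          exact hGns ((Set.subset_empty_iff.mp hsub) ▸ hY)
        · rintro X ⟨-, Y, hY, hsub⟩ Z hZ hXZ
          exact ⟨hZ, Y, hY, hsub.trans hXZ⟩
        · rintro X ⟨hX1, Y, hY, hYX⟩ X' ⟨hX'1, Y', hY', hY'X'⟩
          obtain ⟨Z, hZ, hZY, hZY'⟩ := hGdir Y hY Y' hY'
          exact ⟨Z, hGG' Z hZ, hZY.trans hYX, hZY'.trans hY'X'⟩
      have hG'F : G' = F := hFmax G' hfilt hFG'
      intro Y hY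
      have hYF : Y ∈ F := hG'F ▸ hGG' Y hY
      have hYr : Y ⊆ r := (hGsub hY).2
      exact ⟨Y, hYF, (Set.inter_eq_left.mpr hYr).symm⟩

end
end

section
/- Let (E,ℒ,ℬ) be a labelled space, let α be a nonempty finite labelled path and β ∈ ℒ*(E) be such that αβ is a labelled path. Then the map g_{(α)β} : X_{(α)β} → X_{αβ} is continuous. -/
open Set

section
variable {V Edg A : Type*} (L : LabelledSpace V Edg A)

/-- `g_{(α)β} : X_{(α)β} → X_{αβ}` is continuous (for the topologies of pointwise
convergence). -/
theorem gmap_continuous (α β : List A) (hα : α ≠ []) (hαl : L.IsLbl α)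
    (hβ : L.IsLbl β) (hαβ : L.IsLbl (α ++ β)) :
    @ContinuousOn (Set (Set V)) (Set (Set V)) (memTopology V) (memTopology V)
      (L.gmap α β) (L.XP α β) := by
  letI : TopologicalSpace Prop := ⊥
  letI : TopologicalSpace (Set (Set V)) := memTopology V
  set R := L.wr (α ++ β) with hR
  have hg : Continuous (fun F : Set (Set V) => ({D | D ⊆ R ∧ D ∈ F} : Set (Set V))) := by
    apply continuous_pi
    intro D
    by_cases hD : D ⊆ R
    · show Continuous fun F : Set (Set V) => (D ⊆ R ∧ D ∈ F)
      simp only [hD, true_and]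
      exact continuous_apply D
    · have h : (fun F : Set (Set V) => (D ⊆ R ∧ D ∈ F)) = fun _ => False := by
        funext F; simp [hD]
      show Continuous fun F : Set (Set V) => (D ⊆ R ∧ D ∈ F)
      rw [h]; exact continuous_const
  refine hg.continuousOn.congr ?_
  intro F hF
  obtain ⟨a, l, rfl⟩ : ∃ a l, α = a :: l := by
    cases α with
    | nil => exact absurd rfl hα
    | cons a l => exact ⟨a, l, rfl⟩
  obtain ⟨hFX, hRF⟩ := hF
  obtain ⟨⟨hsub, hne, h0, hup, hdir⟩, -⟩ := hFX
  ext D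
  constructor
  · rintro ⟨C, hC, rfl⟩
    refine ⟨Set.inter_subset_right, ?_⟩
    obtain ⟨Z, hZ, hZC, hZR⟩ := hdir C hC R hRF
    have hCB := hsub hC
    have hRB := hsub hRF
    exact hup Z hZ (C ∩ R)
      ⟨L.inter_mem hCB.1 hRB.1, Set.inter_subset_right.trans hRB.2⟩
      (Set.subset_inter hZC hZR)
  · rintro ⟨hDR, hDF⟩
    exact ⟨D, hDF, (Set.inter_eq_left.mpr hDR).symm⟩

end
end

section
/- Let (E,ℒ,ℬ) be a labelled space, let α be a nonempty finite labelled path and β ∈ ℒ*(E) be such that αβ is a labelled path. Then h_{[α]β} maps X_{αβ} into X_{(α)β}, and the maps h_{[α]β} : X_{αβ} → X_{(α)β} and g_{(α)β} : X_{(α)β} → X_{αβ} are mutually inverse bijections. -/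
open Set

namespace HGAux

variable {V : Type*}

/-- In a meet-closed family, an ultrafilter contains every member of the family
meeting all its elements. -/
lemma mem_of_meets {P F : Set (Set V)} (hP : ∀ X ∈ P, ∀ Y ∈ P, X ∩ Y ∈ P)
    (hF : IsUltrafilterIn P F) {X : Set V} (hX : X ∈ P)
    (h : ∀ Y ∈ F, X ∩ Y ≠ ∅) : X ∈ F := by
  obtain ⟨⟨hsub, hne, hbot, hup, hdir⟩, hmax⟩ := hF
  set G : Set (Set V) := {Z | Z ∈ P ∧ ∃ Y ∈ F, X ∩ Y ⊆ Z} with hGdef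
  have hFG : F ⊆ G := fun Y hY => ⟨hsub hY, Y, hY, inter_subset_right⟩
  have hGF : G = F := by
    apply hmax
    · refine ⟨fun Z hZ => hZ.1, hne.mono hFG, ?_, ?_, ?_⟩
      · rintro ⟨-, Y, hY, hXY⟩
        exact h Y hY (subset_empty_iff.mp hXY)
      · rintro Z ⟨hZP, Y, hY, hXY⟩ W hW hZW
        exact ⟨hW, Y, hY, hXY.trans hZW⟩
      · rintro Z ⟨hZP, Y1, hY1, h1⟩ W ⟨hWP, Y2, hY2, h2⟩
        obtain ⟨Y, hY, hA, hB⟩ := hdir Y1 hY1 Y2 hY2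
        refine ⟨X ∩ Y, ⟨hP X hX Y (hsub hY), Y, hY, subset_rfl⟩, ?_, ?_⟩
        · exact ((inter_subset_inter_right X hA).trans h1)
        · exact ((inter_subset_inter_right X hB).trans h2)
    · exact hFG
  have hXG : X ∈ G := by
    obtain ⟨Y, hY⟩ := hne
    exact ⟨hX, Y, hY, inter_subset_left⟩
  rwa [hGF] at hXG

/-- A filter containing every member of the family meeting all its elements is
an ultrafilter. -/
lemma ultra_of_meets {P F : Set (Set V)} (hF : IsFilterIn P F)
    (h : ∀ X ∈ P, (∀ Y ∈ F, X ∩ Y ≠ ∅) → X ∈ F) : IsUltrafilterIn P F := by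
  refine ⟨hF, fun G hG hFG => Set.Subset.antisymm (fun X hX => ?_) hFG⟩
  apply h X (hG.1 hX)
  intro Y hY hempty
  obtain ⟨Z, hZ, h1, h2⟩ := hG.2.2.2.2 X hX Y (hFG hY)
  apply hG.2.2.1
  have hZe : Z = ∅ := subset_empty_iff.mp (by rw [← hempty]; exact subset_inter h1 h2)
  rwa [hZe] at hZ

/-- A filter in a meet-closed family is closed under intersections. -/
lemma filter_inter_mem {P F : Set (Set V)} (hP : ∀ X ∈ P, ∀ Y ∈ P, X ∩ Y ∈ P)
    (hF : IsFilterIn P F) {X Y : Set V} (hX : X ∈ F) (hY : Y ∈ F) : X ∩ Y ∈ F := by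
  obtain ⟨Z, hZ, h1, h2⟩ := hF.2.2.2.2 X hX Y hY
  exact hF.2.2.2.1 Z hZ _ (hP X (hF.1 hX) Y (hF.1 hY)) (subset_inter h1 h2)

/-- `r(αβ) ⊆ r(β)`. -/
lemma wr_append_subset {V Edg A : Type*} (L : LabelledSpace V Edg A) (α β : List A) :
    L.wr (α ++ β) ⊆ L.wr β := by
  cases β with
  | nil => intro v _; exact trivial
  | cons b m =>
    cases α with
    | nil => exact fun v hv => hv
    | cons a w =>
      rintro v ⟨p, hp, hlbl, hne, -, hlast⟩
      have hlbl' : List.map L.lbl p = (a :: w) ++ (b :: m) := hlbl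
      have hq : (p.drop (a :: w).length).map L.lbl = b :: m := by
        rw [List.map_drop, hlbl', List.drop_left]
      have hqne : p.drop (a :: w).length ≠ [] := by
        intro h0
        rw [h0] at hq
        exact (List.cons_ne_nil b m) hq.symm
      refine ⟨p.drop (a :: w).length, hp.drop _, hq, hqne, trivial, ?_⟩
      have e1 : (p.drop (a :: w).length).getLast? = p.getLast? := by
        conv_rhs => rw [← List.take_append_drop (a :: w).length p]
        rw [List.getLast?_append, List.getLast?_eq_getLast hqne]
        rfl
      have e2 : ((p.drop (a :: w).length).getLast hqne) = p.getLast hne := by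
        have := e1
        rw [List.getLast?_eq_getLast hqne, List.getLast?_eq_getLast hne] at this
        exact Option.some.inj this
      rw [e2, hlast]

end HGAux

section
variable {V Edg A : Type*} (L : LabelledSpace V Edg A)

/-- `h_{[α]β}` maps `X_{αβ}` into `X_{(α)β}`, and `h_{[α]β}` and `g_{(α)β}` are mutually
inverse bijections between `X_{αβ}` and `X_{(α)β}`. -/
theorem hmap_gmap_inverses (α β : List A) (hα : α ≠ []) (hαl : L.IsLbl α)
    (hβ : L.IsLbl β) (hαβ : L.IsLbl (α ++ β)) :
    (∀ F ∈ L.Xw (α ++ β), L.hmap β F ∈ L.XP α β) ∧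
    (∀ F ∈ L.Xw (α ++ β), L.gmap α β (L.hmap β F) = F) ∧
    (∀ F ∈ L.XP α β, L.hmap β (L.gmap α β F) = F) ∧
    Set.BijOn (L.gmap α β) (L.XP α β) (L.Xw (α ++ β)) := by
  classical
  obtain ⟨a, l, rfl⟩ : ∃ a m, α = a :: m := by
    cases α with
    | nil => exact absurd rfl hα
    | cons a m => exact ⟨a, m, rfl⟩
  have hR : L.wr ((a :: l) ++ β) ∈ L.ℬ := L.range_mem _ (by simp) hαβ
  have hRβ : L.wr ((a :: l) ++ β) ⊆ L.wr β := HGAux.wr_append_subset L _ _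
  have hRB : L.wr ((a :: l) ++ β) ∈ L.Bw β := ⟨hR, hRβ⟩
  have hint : ∀ γ : List A, ∀ X ∈ L.Bw γ, ∀ Y ∈ L.Bw γ, X ∩ Y ∈ L.Bw γ :=
    fun γ X hX Y hY => ⟨L.inter_mem hX.1 hY.1, inter_subset_left.trans hX.2⟩
  -- part A : h maps X_{αβ} into X_{(α)β}
  have hA : ∀ F ∈ L.Xw ((a :: l) ++ β), L.hmap β F ∈ L.XP (a :: l) β := by
    intro F hF
    obtain ⟨⟨hsub, hne, hbot, hup, hdir⟩, hmax⟩ := hF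
    have hFβ : ∀ C ∈ F, C ∈ L.Bw β := fun C hC => ⟨(hsub hC).1, (hsub hC).2.trans hRβ⟩
    have hfil : IsFilterIn (L.Bw β) (L.hmap β F) := by
      refine ⟨fun D hD => hD.1, ?_, ?_, ?_, ?_⟩
      · obtain ⟨C, hC⟩ := hne
        exact ⟨C, hFβ C hC, C, hC, subset_rfl⟩
      · rintro ⟨-, C, hC, hCs⟩
        exact hbot ((subset_empty_iff.mp hCs) ▸ hC)
      · rintro D ⟨hDβ, C, hC, hCD⟩ Y hYβ hDY
        exact ⟨hYβ, C, hC, hCD.trans hDY⟩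
      · rintro D1 ⟨h1, C1, hC1, hs1⟩ D2 ⟨h2, C2, hC2, hs2⟩
        obtain ⟨C, hC, ha, hb⟩ := hdir C1 hC1 C2 hC2
        exact ⟨C, ⟨hFβ C hC, C, hC, subset_rfl⟩, ha.trans hs1, hb.trans hs2⟩
    have hultra : IsUltrafilterIn (L.Bw β) (L.hmap β F) := by
      refine HGAux.ultra_of_meets hfil ?_
      intro X hX hmeets
      have hXR : X ∩ L.wr ((a :: l) ++ β) ∈ L.Bw ((a :: l) ++ β) :=
        ⟨L.inter_mem hX.1 hR, inter_subset_right⟩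
      have hXRF : X ∩ L.wr ((a :: l) ++ β) ∈ F := by
        refine HGAux.mem_of_meets (hint _) ⟨⟨hsub, hne, hbot, hup, hdir⟩, hmax⟩ hXR ?_
        intro C hC
        have hCm : C ∈ L.hmap β F := ⟨hFβ C hC, C, hC, subset_rfl⟩
        have hXC := hmeets C hCm
        have heq : X ∩ L.wr ((a :: l) ++ β) ∩ C = X ∩ C := by
          rw [inter_assoc, Set.inter_eq_self_of_subset_right (hsub hC).2]
        rwa [heq]
      exact ⟨hX, X ∩ L.wr ((a :: l) ++ β), hXRF, inter_subset_left⟩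
    refine ⟨hultra, ?_⟩
    obtain ⟨C, hC⟩ := hne
    exact ⟨hRB, C, hC, (hsub hC).2⟩
  -- part B : g ∘ h = id on X_{αβ}
  have hB : ∀ F ∈ L.Xw ((a :: l) ++ β), L.gmap (a :: l) β (L.hmap β F) = F := by
    intro F hF
    obtain ⟨⟨hsub, hne, hbot, hup, hdir⟩, hmax⟩ := hF
    have hFβ : ∀ C ∈ F, C ∈ L.Bw β := fun C hC => ⟨(hsub hC).1, (hsub hC).2.trans hRβ⟩
    ext X
    constructor
    · rintro ⟨D, ⟨hDβ, C, hC, hCD⟩, rfl⟩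
      refine hup C hC _ ⟨L.inter_mem hDβ.1 hR, inter_subset_right⟩
        (subset_inter hCD (hsub hC).2)
    · intro hX
      exact ⟨X, ⟨hFβ X hX, X, hX, subset_rfl⟩,
        (Set.inter_eq_self_of_subset_left (hsub hX).2).symm⟩
  -- characterization of g on X_{(α)β}
  have hgchar : ∀ G ∈ L.XP (a :: l) β, ∀ X : Set V,
      X ∈ L.gmap (a :: l) β G ↔ X ∈ G ∧ X ⊆ L.wr ((a :: l) ++ β) := by
    rintro G ⟨hGu, hRG⟩ X
    constructor
    · rintro ⟨C, hC, rfl⟩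
      exact ⟨HGAux.filter_inter_mem (hint β) hGu.1 hC hRG, inter_subset_right⟩
    · rintro ⟨hXG, hXR⟩
      exact ⟨X, hXG, (Set.inter_eq_self_of_subset_left hXR).symm⟩
  -- part C1 : g maps X_{(α)β} into X_{αβ}
  have hC1 : ∀ G ∈ L.XP (a :: l) β, L.gmap (a :: l) β G ∈ L.Xw ((a :: l) ++ β) := by
    intro G hG
    obtain ⟨hGu, hRG⟩ := hG
    obtain ⟨⟨hsub, hne, hbot, hup, hdir⟩, hmax⟩ := hGu
    have hchar := hgchar G ⟨⟨⟨hsub, hne, hbot, hup, hdir⟩, hmax⟩, hRG⟩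
    have hfil : IsFilterIn (L.Bw ((a :: l) ++ β)) (L.gmap (a :: l) β G) := by
      refine ⟨?_, ?_, ?_, ?_, ?_⟩
      · intro X hX
        obtain ⟨hXG, hXR⟩ := (hchar X).mp hX
        exact ⟨(hsub hXG).1, hXR⟩
      · exact ⟨L.wr ((a :: l) ++ β), (hchar _).mpr ⟨hRG, subset_rfl⟩⟩
      · intro h0
        exact hbot ((hchar ∅).mp h0).1
      · intro X hX Y hY hXY
        obtain ⟨hXG, hXR⟩ := (hchar X).mp hX
        refine (hchar Y).mpr ⟨hup X hXG Y ⟨hY.1, hY.2.trans hRβ⟩ hXY, hY.2⟩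
      · intro X hX Y hY
        obtain ⟨hXG, hXR⟩ := (hchar X).mp hX
        obtain ⟨hYG, hYR⟩ := (hchar Y).mp hY
        obtain ⟨Z, hZ, h1, h2⟩ := hdir X hXG Y hYG
        exact ⟨Z, (hchar Z).mpr ⟨hZ, h1.trans hXR⟩, h1, h2⟩
    refine HGAux.ultra_of_meets hfil ?_
    intro Z hZ hmeets
    have hZβ : Z ∈ L.Bw β := ⟨hZ.1, hZ.2.trans hRβ⟩
    have hZG : Z ∈ G := by
      refine HGAux.mem_of_meets (hint β) ⟨⟨hsub, hne, hbot, hup, hdir⟩, hmax⟩ hZβ ?_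
      intro W hW
      have hWR : W ∩ L.wr ((a :: l) ++ β) ∈ L.gmap (a :: l) β G :=
        (hchar _).mpr ⟨HGAux.filter_inter_mem (hint β) ⟨hsub, hne, hbot, hup, hdir⟩ hW hRG,
          inter_subset_right⟩
      have := hmeets _ hWR
      intro hZW
      apply this
      rw [← subset_empty_iff] at hZW ⊢
      exact (inter_subset_inter_right Z inter_subset_left).trans hZW
    exact (hchar Z).mpr ⟨hZG, hZ.2⟩
  -- part C2 : h ∘ g = id on X_{(α)β}
  have hC2 : ∀ G ∈ L.XP (a :: l) β, L.hmap β (L.gmap (a :: l) β G) = G := by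
    intro G hG
    have hchar := hgchar G hG
    obtain ⟨⟨⟨hsub, hne, hbot, hup, hdir⟩, hmax⟩, hRG⟩ := hG
    ext D
    constructor
    · rintro ⟨hDβ, C, hC, hCD⟩
      exact hup C ((hchar C).mp hC).1 D hDβ hCD
    · intro hD
      refine ⟨hsub hD, D ∩ L.wr ((a :: l) ++ β),
        (hchar _).mpr ⟨HGAux.filter_inter_mem (hint β) ⟨hsub, hne, hbot, hup, hdir⟩ hD hRG,
          inter_subset_right⟩, inter_subset_left⟩
  refine ⟨hA, hB, hC2, hC1, ?_, ?_⟩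
  · intro G1 h1 G2 h2 heq
    rw [← hC2 G1 h1, ← hC2 G2 h2, heq]
  · intro F hF
    exact ⟨L.hmap β F, hA F hF, hB F hF⟩

end
end

section
/- Let (E,ℒ,ℬ) be a labelled space, let α be a nonempty finite labelled path and β ∈ ℒ*(E) be such that αβ is a labelled path. Then (i) h_{[α]β}(X_{αβ}^{sink}) ⊆ X_β^{sink}, and (ii) the map h_{[α]β} : X_{αβ} → X_β is continuous. -/
open Set

section AuxLemmas

open Set

variable {V Edg A : Type*} (L : LabelledSpace V Edg A)

lemma aux_relR_ne_nil (G : LGraph V Edg A) (S : Set V) {γ : List A} (h : γ ≠ []) :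
    G.relR S γ = {v | ∃ p : List Edg, G.IsPath p ∧ p.map G.lbl = γ ∧
      ∃ h : p ≠ [], G.src (p.head h) ∈ S ∧ G.rng (p.getLast h) = v} := by
  cases γ with
  | nil => exact absurd rfl h
  | cons a w => rfl

lemma aux_wr_append_subset (α β : List A) : L.wr (α ++ β) ⊆ L.wr β := by
  rcases eq_or_ne β [] with rfl | hβ
  · intro v _; exact trivial
  · rcases eq_or_ne α [] with rfl | hα
    · simp
    intro v hv
    have hv' : v ∈ L.toLGraph.relR Set.univ (α ++ β) := hv
    rw [aux_relR_ne_nil _ _ (show α ++ β ≠ [] by simp [hα])] at hv'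
    show v ∈ L.toLGraph.relR Set.univ β
    rw [aux_relR_ne_nil _ _ hβ]
    obtain ⟨p, hp, hl, hne, -, hlast⟩ := hv'
    have hm : (p.drop α.length).map L.lbl = β := by
      rw [List.map_drop, hl, List.drop_left]
    have hqne : p.drop α.length ≠ [] := by
      intro h; rw [h] at hm; exact hβ hm.symm
    refine ⟨p.drop α.length, List.IsChain.drop hp _, hm, hqne, trivial, ?_⟩
    rw [← hlast, List.getLast_drop]

lemma aux_Bw_subset (α β : List A) : L.Bw (α ++ β) ⊆ L.Bw β :=
  fun X hX => ⟨hX.1, hX.2.trans (aux_wr_append_subset L α β)⟩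

variable {L}

/-- Characterization of `hmap` on filters. -/
lemma aux_hmap_mem_iff {α β : List A} (hα : α ≠ []) (hαβ : L.IsLbl (α ++ β))
    {F : Set (Set V)} (hF : IsFilterIn (L.Bw (α ++ β)) F) (D : Set V) :
    D ∈ L.hmap β F ↔ D ∈ L.Bw β ∧ D ∩ L.wr (α ++ β) ∈ F := by
  obtain ⟨hFP, -, -, hup, -⟩ := hF
  have hRab : L.wr (α ++ β) ∈ L.ℬ :=
    L.range_mem (α ++ β) (by simp [hα]) hαβ
  constructor
  · rintro ⟨hDβ, C, hC, hCD⟩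
    refine ⟨hDβ, hup C hC _ ⟨L.inter_mem hDβ.1 hRab, Set.inter_subset_right⟩ ?_⟩
    exact Set.subset_inter hCD (hFP hC).2
  · rintro ⟨hDβ, hmem⟩
    exact ⟨hDβ, D ∩ L.wr (α ++ β), hmem, Set.inter_subset_left⟩

/-- `hmap` sends ultrafilters in `ℬ_{αβ}` to ultrafilters in `ℬ_β`. -/
lemma aux_hmap_ultra {α β : List A} (hα : α ≠ []) (hαβ : L.IsLbl (α ++ β))
    {F : Set (Set V)} (hF : IsUltrafilterIn (L.Bw (α ++ β)) F) :
    IsUltrafilterIn (L.Bw β) (L.hmap β F) := by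
  obtain ⟨hFf, hFmax⟩ := hF
  obtain ⟨hFP, ⟨C₀, hC₀⟩, hne, hup, hdir⟩ := hFf
  have hRab : L.wr (α ++ β) ∈ L.ℬ := L.range_mem (α ++ β) (by simp [hα]) hαβ
  have hsub := aux_Bw_subset L α β
  have hmemh : ∀ C ∈ F, C ∈ L.hmap β F :=
    fun C hC => ⟨hsub (hFP hC), C, hC, subset_rfl⟩
  constructor
  · refine ⟨fun D hD => hD.1, ⟨C₀, hmemh C₀ hC₀⟩, ?_, ?_, ?_⟩
    · rintro ⟨-, C, hC, hCe⟩
      exact hne (by rwa [Set.subset_empty_iff.mp hCe] at hC)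
    · rintro X ⟨-, C, hC, hCX⟩ Y hY hXY
      exact ⟨hY, C, hC, hCX.trans hXY⟩
    · rintro X ⟨-, C, hC, hCX⟩ Y ⟨-, C', hC', hC'Y⟩
      obtain ⟨Z, hZ, hZC, hZC'⟩ := hdir C hC C' hC'
      exact ⟨Z, hmemh Z hZ, hZC.trans hCX, hZC'.trans hC'Y⟩
  · intro G hG hhG
    obtain ⟨hGP, -, hGne, hGup, hGdir⟩ := hG
    -- The auxiliary filter F' in ℬ_{αβ}
    set F' : Set (Set V) :=
      {X | X ∈ L.Bw (α ++ β) ∧ ∃ D ∈ G, D ∩ L.wr (α ++ β) ⊆ X} with hF'def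
    have hFF' : F ⊆ F' := by
      intro C hC
      exact ⟨hFP hC, C, hhG (hmemh C hC), Set.inter_subset_left⟩
    have hF'filter : IsFilterIn (L.Bw (α ++ β)) F' := by
      refine ⟨fun X hX => hX.1, ⟨C₀, hFF' hC₀⟩, ?_, ?_, ?_⟩
      · rintro ⟨-, D, hD, hDe⟩
        obtain ⟨Z, hZ, hZC₀, hZD⟩ := hGdir C₀ (hhG (hmemh C₀ hC₀)) D hD
        have : Z = ∅ := Set.subset_empty_iff.mp
          ((Set.subset_inter hZD (hZC₀.trans (hFP hC₀).2)).trans hDe)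
        exact hGne (this ▸ hZ)
      · rintro X ⟨-, D, hD, hDX⟩ Y hY hXY
        exact ⟨hY, D, hD, hDX.trans hXY⟩
      · rintro X ⟨hX, D, hD, hDX⟩ Y ⟨hY, D', hD', hD'Y⟩
        obtain ⟨Z, hZ, hZD, hZD'⟩ := hGdir D hD D' hD'
        refine ⟨Z ∩ L.wr (α ++ β),
          ⟨⟨L.inter_mem (hGP hZ).1 hRab, Set.inter_subset_right⟩, Z, hZ, subset_rfl⟩,
          ?_, ?_⟩
        · exact (Set.inter_subset_inter_left _ hZD).trans hDX
        · exact (Set.inter_subset_inter_left _ hZD').trans hD'Y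
    have hF'F : F' = F := hFmax F' hF'filter hFF'
    -- Now show G ⊆ hmap β F
    apply Set.Subset.antisymm _ hhG
    intro D hD
    have hDmem : D ∩ L.wr (α ++ β) ∈ F' :=
      ⟨⟨L.inter_mem (hGP hD).1 hRab, Set.inter_subset_right⟩, D, hD, subset_rfl⟩
    rw [hF'F] at hDmem
    exact ⟨hGP hD, D ∩ L.wr (α ++ β), hDmem, Set.inter_subset_left⟩

end AuxLemmas

section
variable {V Edg A : Type*} (L : LabelledSpace V Edg A)

/-- (i) `h_{[α]β}(X_{αβ}^{sink}) ⊆ X_β^{sink}` and (ii) `h_{[α]β} : X_{αβ} → X_β` is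
continuous. -/
theorem hmap_sink_continuous (α β : List A) (hα : α ≠ []) (hαl : L.IsLbl α)
    (hβ : L.IsLbl β) (hαβ : L.IsLbl (α ++ β)) :
    (∀ F ∈ L.Xsink (α ++ β), L.hmap β F ∈ L.Xsink β) ∧
    @ContinuousOn (Set (Set V)) (Set (Set V)) (memTopology V) (memTopology V)
      (L.hmap β) (L.Xw (α ++ β)) := by
  have hαβne : α ++ β ≠ [] := by simp [hα]
  constructor
  · rintro F ⟨hFX, hFsink⟩
    refine ⟨aux_hmap_ultra hα hαβ hFX, fun b => ?_⟩
    obtain ⟨X, hX, hXb⟩ := hFsink b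
    exact ⟨X, ⟨aux_Bw_subset L α β (hFX.1.1 hX), X, hX, subset_rfl⟩, hXb⟩
  · letI : TopologicalSpace Prop := ⊥
    letI : TopologicalSpace (Set (Set V)) := memTopology V
    rw [continuousOn_iff_continuous_restrict]
    have : Continuous fun (F : (L.Xw (α ++ β) : Set (Set (Set V)))) (D : Set V) =>
        (D ∈ L.Bw β ∧ D ∩ L.wr (α ++ β) ∈ (F : Set (Set V)) : Prop) := by
      apply continuous_pi
      intro D
      by_cases hD : D ∈ L.Bw β
      · simp only [hD, true_and]
        exact (continuous_apply (D ∩ L.wr (α ++ β))).comp continuous_subtype_val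
      · simp only [hD, false_and]
        exact continuous_const
    suffices e : ((L.Xw (α ++ β)).domRestrict (L.hmap β) : L.Xw (α ++ β) → Set V → Prop) =
        fun (F : (L.Xw (α ++ β) : Set (Set (Set V)))) (D : Set V) =>
          (D ∈ L.Bw β ∧ D ∩ L.wr (α ++ β) ∈ (F : Set (Set V)) : Prop) by
      exact cast (congrArg (fun f : L.Xw (α ++ β) → Set V → Prop => Continuous f) e.symm) this
    funext F
    funext D
    exact propext (aux_hmap_mem_iff hα hαβ F.2.1 D)

end
end

section
/- Let (E,ℒ,ℬ) be a weakly left-resolving labelled space with ℬ closed under relative complements, let α,β be nonempty finite labelled paths and γ ∈ ℒ^{≤∞}(E) be such that αβγ ∈ ℒ^{≤∞}(E). Then (i) T_{(αβ)γ} ⊆ T_{(β)γ}, and (ii) G_{(αβ)γ} = G_{(α)βγ} ∘ G_{(β)γ} on T_{(αβ)γ}. -/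
open Set

section

section
variable {V Edg A : Type*} (G : LGraph V Edg A)
namespace LGraph

theorem mem_relR {X : Set V} {v : V} :
    ∀ {γ : List A}, γ ≠ [] → (v ∈ G.relR X γ ↔ ∃ p : List Edg, G.IsPath p ∧
      p.map G.lbl = γ ∧ ∃ h : p ≠ [], G.src (p.head h) ∈ X ∧ G.rng (p.getLast h) = v)
  | [], h => absurd rfl h
  | _ :: _, _ => Iff.rfl

theorem relR_mono {X Y : Set V} (h : X ⊆ Y) : ∀ γ : List A, G.relR X γ ⊆ G.relR Y γ
  | [] => h
  | _ :: _ => fun _ ⟨p, hp, hm, hne, hs, hr⟩ => ⟨p, hp, hm, hne, h hs, hr⟩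

theorem relR_append (X : Set V) (γ δ : List A) :
    G.relR (G.relR X γ) δ = G.relR X (γ ++ δ) := by
  rcases eq_or_ne γ [] with rfl | hγ
  · rfl
  rcases eq_or_ne δ [] with rfl | hδ
  · simp [LGraph.relR]
  have hγδ : γ ++ δ ≠ [] := by simp [hγ]
  ext v
  rw [G.mem_relR hδ, G.mem_relR hγδ]
  constructor
  · rintro ⟨q, hq, hqm, hqe, hs, hr⟩
    rw [G.mem_relR hγ] at hs
    obtain ⟨p, hp, hpm, hpe, hps, hpr⟩ := hs
    refine ⟨p ++ q, hp.append hq ?_, by simp [hpm, hqm], ?_, ?_, ?_⟩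
    · intro x hx y hy
      rw [List.getLast?_eq_getLast hpe, Option.mem_def, Option.some_inj] at hx
      rw [List.head?_eq_head hqe, Option.mem_def, Option.some_inj] at hy
      subst hx; subst hy; exact hpr
    · simp [hpe]
    · rwa [List.head_append_of_ne_nil hpe]
    · rwa [List.getLast_append_of_ne_nil _ hqe]
  · rintro ⟨p, hp, hm, hne, hs, hr⟩
    have hlen : p.length = γ.length + δ.length := by
      rw [← List.length_map (as := p) G.lbl, hm, List.length_append]
    have hδl : 0 < δ.length := List.length_pos_iff.mpr hδ
    have hγl : 0 < γ.length := List.length_pos_iff.mpr hγ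
    have h1e : p.take γ.length ≠ [] := by
      rw [← List.length_pos_iff, List.length_take]; omega
    have h2e : p.drop γ.length ≠ [] := by
      rw [← List.length_pos_iff, List.length_drop]; omega
    have hsplit : p.take γ.length ++ p.drop γ.length = p := List.take_append_drop _ _
    have hp' : G.IsPath (p.take γ.length ++ p.drop γ.length) := hsplit.symm ▸ hp
    have hm1 : (p.take γ.length).map G.lbl = γ := by
      rw [List.map_take, hm, List.take_left' rfl]
    have hm2 : (p.drop γ.length).map G.lbl = δ := by
      rw [List.map_drop, hm, List.drop_left' rfl]
    have hch := (List.isChain_append.mp hp').2.2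
    refine ⟨p.drop γ.length, hp.drop _, hm2, h2e, ?_, ?_⟩
    · rw [G.mem_relR hγ]
      refine ⟨p.take γ.length, hp.infix ((List.take_prefix _ _).isInfix), hm1, h1e, ?_, ?_⟩
      · rw [List.head_take h1e]; exact hs
      · exact hch _ (List.getLast?_eq_getLast h1e) _ (List.head?_eq_head h2e)
    · rw [List.getLast_drop h2e]; exact hr

theorem IsLbl.infix {l l' : List A} (h : G.IsLbl l) (h' : l' <:+: l) : G.IsLbl l' := by
  obtain ⟨s, t, rfl⟩ := h'
  obtain ⟨p, hp, hm⟩ := h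
  refine ⟨(p.drop s.length).take l'.length, hp.infix ?_, ?_⟩
  · exact ((List.take_prefix _ _).isInfix).trans ((List.drop_suffix _ _).isInfix)
  · rw [List.append_assoc] at hm
    rw [List.map_take, List.map_drop, hm, List.drop_left' rfl, List.take_left' rfl]

end LGraph
end

section WordLemmas
variable {A : Type*}

theorem wtake_zero (w : LWord A) : wtake w 0 = [] := by cases w <;> rfl

theorem wlen_wappend (θ : List A) (w : LWord A) :
    wlen (wappend θ w) = (θ.length : ℕ∞) + wlen w := by
  cases w with
  | inl l => simp [wappend, wlen, Nat.cast_add]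
  | inr f => simp [wappend, wlen]

theorem one_le_wlen {w : LWord A} (h : w ≠ .inl []) : (1 : ℕ∞) ≤ wlen w := by
  cases w with
  | inl l =>
    cases l with
    | nil => exact absurd rfl h
    | cons x l' => simp only [wlen]; exact_mod_cast Nat.succ_le_succ (Nat.zero_le _)
  | inr f => simp [wlen]

theorem cast_add_le_wlen {n k : ℕ} {w : LWord A} (h : (n : ℕ∞) ≤ wlen w) :
    ((k + n : ℕ) : ℕ∞) ≤ (k : ℕ∞) + wlen w := by
  push_cast
  exact add_le_add_right h _

theorem cast_le_wlen_sub {i k : ℕ} {w : LWord A} (h : (i : ℕ∞) ≤ (k : ℕ∞) + wlen w) :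
    ((i - k : ℕ) : ℕ∞) ≤ wlen w := by
  cases w with
  | inl l =>
    simp only [wlen] at *
    rw [← Nat.cast_add, Nat.cast_le] at h
    rw [Nat.cast_le]; omega
  | inr f => simp [wlen]

theorem wtake_wappend_le {θ : List A} {n : ℕ} (h : n ≤ θ.length) (w : LWord A) :
    wtake (wappend θ w) n = θ.take n := by
  cases w with
  | inl l => simp [wappend, wtake, List.take_append_of_le_length h]
  | inr f =>
    simp only [wappend, wtake]
    apply List.ext_getElem
    · simp; omega
    · intro i h1 h2
      simp only [List.getElem_map, List.getElem_range, List.getElem_take]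
      have : i < θ.length := by simp at h2; omega
      rw [dif_pos this]
      rfl

theorem wtake_wappend_ge {θ : List A} {n : ℕ} (h : θ.length ≤ n) (w : LWord A) :
    wtake (wappend θ w) n = θ ++ wtake w (n - θ.length) := by
  cases w with
  | inl l =>
    simp only [wappend, wtake, List.take_append]
    rw [List.take_of_length_le h]
  | inr f =>
    simp only [wappend, wtake]
    apply List.ext_getElem
    · simp; omega
    · intro i h1 h2
      simp only [List.getElem_map, List.getElem_range]
      rcases lt_or_ge i θ.length with hi | hi
      · rw [dif_pos hi, List.getElem_append_left hi]
        rfl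
      · rw [dif_neg (not_lt.mpr hi), List.getElem_append_right hi]
        simp

theorem wtake_take {w : LWord A} {n m : ℕ} (h : n ≤ m) :
    (wtake w m).take n = wtake w n := by
  cases w with
  | inl l => simp [wtake, List.take_take, min_eq_left h]
  | inr f => simp [wtake, ← List.map_take, List.take_range, min_eq_left h]

theorem wtake_concat {w : LWord A} {n m : ℕ} (h : n ≤ m) :
    wtake w n ++ (wtake w m).drop n = wtake w m := by
  conv_lhs => rw [← wtake_take h]
  exact List.take_append_drop _ _

theorem length_wtake {w : LWord A} {n : ℕ} (h : (n : ℕ∞) ≤ wlen w) :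
    (wtake w n).length = n := by
  cases w with
  | inl l =>
    simp only [wlen, Nat.cast_le] at h
    simp [wtake, min_eq_left h]
  | inr f => simp [wtake]

theorem wappend_wappend (α β : List A) (w : LWord A) :
    wappend α (wappend β w) = wappend (α ++ β) w := by
  cases w with
  | inl l => simp [wappend, List.append_assoc]
  | inr f =>
    simp only [wappend, Sum.inr.injEq]
    funext n
    simp only [List.length_append]
    rcases lt_or_ge n α.length with h1 | h1
    · rw [dif_pos h1, dif_pos (by omega)]
      simp [List.getElem_append_left h1]
    · rw [dif_neg (not_lt.mpr h1)]
      rcases lt_or_ge (n - α.length) β.length with h2 | h2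
      · rw [dif_pos h2, dif_pos (by omega)]
        simp [List.getElem_append_right h1]
      · rw [dif_neg (not_lt.mpr h2), dif_neg (by omega)]
        congr 1
        omega

end WordLemmas

namespace LabelledSpace
variable {V Edg A : Type*} (L : LabelledSpace V Edg A)

theorem wr_append (γ δ : List A) : L.wr (γ ++ δ) = L.relR (L.wr γ) δ :=
  (L.toLGraph.relR_append _ _ _).symm

theorem wr_suffix (γ δ : List A) : L.wr (γ ++ δ) ⊆ L.wr δ := by
  rw [L.wr_append]
  exact L.toLGraph.relR_mono (Set.subset_univ _) δ

theorem relR_sub_wr {X : Set V} {γ : List A} (h : X ⊆ L.wr γ) (δ : List A) :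
    L.relR X δ ⊆ L.wr (γ ++ δ) := by
  rw [L.wr_append]
  exact L.toLGraph.relR_mono h δ

theorem isLbl_nil : L.IsLbl ([] : List A) := ⟨[], List.isChain_nil, rfl⟩

theorem isLbl_wtake {w : LWord A} (hw : L.IsLWord w) (n : ℕ) : L.IsLbl (wtake w n) := by
  cases w with
  | inl l =>
    exact LGraph.IsLbl.infix _ hw ((List.take_prefix _ _).isInfix)
  | inr f =>
    obtain ⟨p, hp, hl⟩ := hw
    refine ⟨(List.range n).map p, ?_, ?_⟩
    · rw [LGraph.IsPath, List.Chain', List.isChain_iff_getElem]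
      intro i hi
      simp only [List.get_eq_getElem, List.getElem_map, List.getElem_range]
      exact hp i
    · simp only [wtake, List.map_map]
      exact List.map_congr_left fun i _ => hl i

theorem mem_Bw {X : Set V} {θ : List A} : X ∈ L.Bw θ ↔ X ∈ L.ℬ ∧ X ⊆ L.wr θ := Iff.rfl

theorem wr_mem_ℬ {θ : List A} (hθ : θ ≠ []) (h : L.IsLbl θ) : L.wr θ ∈ L.ℬ :=
  L.range_mem θ hθ h

/-- filter intersection closure -/
theorem IsFilterIn.inter_mem' {θ : List A} {F : Set (Set V)}
    (hF : IsFilterIn (L.Bw θ) F) {X Y : Set V} (hX : X ∈ F) (hY : Y ∈ F) : X ∩ Y ∈ F := by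
  obtain ⟨Z, hZ, hZX, hZY⟩ := hF.2.2.2.2 X hX Y hY
  refine hF.2.2.2.1 Z hZ (X ∩ Y) ?_ (Set.subset_inter hZX hZY)
  have h1 := hF.1 hX
  have h2 := hF.1 hY
  exact ⟨L.inter_mem h1.1 h2.1, fun v hv => h1.2 hv.1⟩

theorem ESle_refl (p : Option (List A × Set V)) : L.ESle p p := by
  cases p with
  | none => trivial
  | some q => exact ⟨[], by simp, fun v hv => hv⟩

theorem ESle_trans {p q r : Option (List A × Set V)}
    (h1 : L.ESle p q) (h2 : L.ESle q r) : L.ESle p r := by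
  cases p with
  | none => trivial
  | some p' =>
    cases q with
    | none => exact absurd h1 (by simp [ESle])
    | some q' =>
      cases r with
      | none => exact absurd h2 (by simp [ESle])
      | some r' =>
        obtain ⟨γ, hγ, hs⟩ := h1
        obtain ⟨δ, hδ, hs'⟩ := h2
        refine ⟨δ ++ γ, by rw [hγ, hδ, List.append_assoc], ?_⟩
        refine hs.trans ?_
        have := L.toLGraph.relR_mono hs' γ
        rwa [L.toLGraph.relR_append] at this

theorem mem_filterOf {w : LWord A} {F : ℕ → Set (Set V)} {p : Option (List A × Set V)} :
    p ∈ L.filterOf w F ↔ L.ESmem p ∧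
      ∃ n : ℕ, (n : ℕ∞) ≤ wlen w ∧ ∃ X ∈ F n, L.ESle (some (wtake w n, X)) p := Iff.rfl

theorem filterOf_subset_of_dominated {w : LWord A} {F F' : ℕ → Set (Set V)}
    (h : ∀ n : ℕ, (n : ℕ∞) ≤ wlen w → ∀ X ∈ F n, ∃ m : ℕ, (m : ℕ∞) ≤ wlen w ∧
      ∃ Y ∈ F' m, L.ESle (some (wtake w m, Y)) (some (wtake w n, X))) :
    L.filterOf w F ⊆ L.filterOf w F' := by
  rintro p ⟨hmem, n, hn, X, hX, hle⟩
  obtain ⟨m, hm, Y, hY, hle'⟩ := h n hn X hX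
  exact ⟨hmem, m, hm, Y, hY, L.ESle_trans hle' hle⟩

end LabelledSpace

namespace LabelledSpace
variable {V Edg A : Type*} (L : LabelledSpace V Edg A)

theorem relR_append₂ (X : Set V) (γ δ : List A) :
    L.relR (L.relR X γ) δ = L.relR X (γ ++ δ) := L.toLGraph.relR_append X γ δ

theorem relR_mono₂ {X Y : Set V} (h : X ⊆ Y) (γ : List A) : L.relR X γ ⊆ L.relR Y γ :=
  L.toLGraph.relR_mono h γ

theorem seg_concat {A : Type*} {w : LWord A} {n j : ℕ} (hn : n ≤ j) (hj : (j : ℕ∞) ≤ wlen w) :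
    (wtake w j).drop n ++ (wtake w (j + 1)).drop j = (wtake w (j + 1)).drop n := by
  have h1 : wtake w j ++ (wtake w (j + 1)).drop j = wtake w (j + 1) := wtake_concat (Nat.le_succ j)
  have h2 : n ≤ (wtake w j).length := by rw [length_wtake hj]; exact hn
  conv_rhs => rw [← h1]
  rw [List.drop_append_of_le_length h2]

theorem isLbl_seg {w : LWord A} (hw : L.IsLWord w) (n j : ℕ) :
    L.IsLbl ((wtake w j).drop n) :=
  (L.isLbl_wtake hw j).infix _ (List.drop_suffix _ _).isInfix

theorem seg_mem_Bw {w : LWord A} (hw : L.IsLWord w) {n j : ℕ} (hn : n ≤ j) {X : Set V}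
    (hX : X ∈ L.Bw (wtake w n)) : L.relR X ((wtake w j).drop n) ∈ L.Bw (wtake w j) := by
  constructor
  · exact L.relR_mem hX.1 _ (L.isLbl_seg hw n j)
  · have := L.relR_sub_wr hX.2 ((wtake w j).drop n)
    rwa [wtake_concat hn] at this

theorem mem_filterOf_self {w : LWord A} {F : ℕ → Set (Set V)} {n : ℕ} {X : Set V}
    (hfil : IsFilterIn (L.Bw (wtake w n)) (F n)) (hn : (n : ℕ∞) ≤ wlen w) (hX : X ∈ F n) :
    some (wtake w n, X) ∈ L.filterOf w F := by
  exact ⟨⟨hfil.1 hX, fun h => hfil.2.2.1 (h ▸ hX)⟩, n, hn, X, hX, L.ESle_refl _⟩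

theorem xiN_recover_mem {w : LWord A} (hw : L.IsLWord w) {F : ℕ → Set (Set V)}
    (hF : L.IsCompleteFamily w F) {n : ℕ} (hn : (n : ℕ∞) ≤ wlen w) {X : Set V}
    (h : some (wtake w n, X) ∈ L.filterOf w F) : X ∈ F n := by
  obtain ⟨⟨hBw, hXne⟩, m, hm, Y, hY, γ, hpre, hsub⟩ := h
  have hlm : (wtake w m).length = m := length_wtake hm
  have hln : (wtake w n).length = n := length_wtake hn
  have hnm : n ≤ m := by
    have := congrArg List.length hpre
    rw [hlm, List.length_append, hln] at this
    omega
  have hγ : γ = (wtake w m).drop n := by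
    have := congrArg (List.drop n) hpre
    rw [List.drop_append_of_le_length (le_of_eq hln.symm),
      List.drop_eq_nil_of_le (le_of_eq hln), List.nil_append] at this
    exact this.symm
  have hFm : IsFilterIn (L.Bw (wtake w m)) (F m) := by
    rcases Nat.eq_zero_or_pos m with rfl | hm0
    · rcases hF.2.1 with h0 | h0
      · simpa [wtake_zero] using h0
      · rw [h0] at hY; exact absurd hY (Set.notMem_empty _)
    · exact hF.1 m hm0 hm
  have main : ∀ d : ℕ, ∀ j : ℕ, n ≤ j → j + d = m →
      L.relR X ((wtake w j).drop n) ∈ F j := by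
    intro d
    induction d with
    | zero =>
      intro j hnj hjm
      have : j = m := by omega
      subst this
      refine hFm.2.2.2.1 Y hY _ (L.seg_mem_Bw hw hnj hBw) ?_
      rw [hγ] at hsub
      exact hsub
    | succ d ih =>
      intro j hnj hjm
      have hjw : ((j : ℕ∞)) ≤ wlen w := le_trans (Nat.cast_le.mpr (by omega)) hm
      have hjlt : ((j : ℕ∞)) < wlen w :=
        lt_of_lt_of_le (Nat.cast_lt.mpr (by omega)) (le_trans (Nat.cast_le.mpr (by omega : j + 1 ≤ m)) hm)
      have hmem := ih (j + 1) (by omega) (by omega)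
      rw [hF.2.2 j hjlt]
      refine ⟨L.seg_mem_Bw hw hnj hBw, ?_⟩
      rw [L.relR_append₂, seg_concat hnj hjw]
      exact hmem
  have h5 := main (m - n) n (le_refl n) (by omega)
  rw [List.drop_eq_nil_of_le (le_of_eq hln)] at h5
  exact h5

theorem propagate {w : LWord A} {F : ℕ → Set (Set V)}
    (hF : L.IsCompleteFamily w F) {R : Set V} (hR : R ∈ F 0) :
    ∀ n : ℕ, (n : ℕ∞) ≤ wlen w → L.relR R (wtake w n) ∈ F n := by
  intro n
  induction n with
  | zero => intro _; rw [wtake_zero]; exact hR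
  | succ n ih =>
    intro hn
    have hn' : ((n : ℕ∞)) ≤ wlen w := le_trans (Nat.cast_le.mpr (Nat.le_succ n)) hn
    have hlt : ((n : ℕ∞)) < wlen w := lt_of_lt_of_le (Nat.cast_lt.mpr (Nat.lt_succ_self n)) hn
    have h1 := ih hn'
    rw [hF.2.2 n hlt] at h1
    have h2 := h1.2
    rwa [L.relR_append₂, wtake_concat (Nat.le_succ n)] at h2

end LabelledSpace

namespace LabelledSpace
variable {V Edg A : Type*} (L : LabelledSpace V Edg A)

theorem wr_nil : L.wr ([] : List A) = Set.univ := rfl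

theorem TwP_ne {θ : List A} (h : θ ≠ []) (w : LWord A) :
    L.TwP θ w = {ξ | ξ ∈ L.Tw w ∧ IsUltrafilterIn (L.Bw []) (L.xiN w ξ 0) ∧
      L.wr θ ∈ L.xiN w ξ 0} := by
  cases θ with
  | nil => exact absurd rfl h
  | cons a l => rfl

theorem Jfamily_ne {w : LWord A} (h : w ≠ .inl []) (θ : List A) (F : ℕ → Set (Set V)) :
    L.Jfamily θ w F = fun i =>
      if i ≤ θ.length then
        L.fmap (θ.take i) (θ.drop i ++ wtake w 1) (L.gmap θ (wtake w 1) (F 1))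
      else L.gmap θ (wtake w (i - θ.length)) (F (i - θ.length)) := by
  cases w with
  | inl l =>
    cases l with
    | nil => exact absurd rfl h
    | cons a l' => rfl
  | inr f => rfl

theorem Jfamily_nil (θ : List A) (F : ℕ → Set (Set V)) :
    L.Jfamily θ (.inl []) F = fun i =>
      if i < θ.length then L.fmap (θ.take i) (θ.drop i) (L.gmap θ [] (F 0))
      else L.gmap θ [] (F 0) := rfl

theorem mem_gmap {θ δ : List A} {F : Set (Set V)} {D : Set V} :
    D ∈ L.gmap θ δ F ↔ ∃ C ∈ F, D = C ∩ L.wr (θ ++ δ) := Iff.rfl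

theorem mem_fmap {θ δ : List A} {F : Set (Set V)} {X : Set V} :
    X ∈ L.fmap θ δ F ↔ X ∈ L.Bw θ ∧ L.relR X δ ∈ F := Iff.rfl

theorem mem_xiN {w : LWord A} {ξ : Set (Option (List A × Set V))} {n : ℕ} {X : Set V} :
    X ∈ L.xiN w ξ n ↔ some (wtake w n, X) ∈ ξ := Iff.rfl

theorem sub_relR_inter (hwlr : L.WeaklyLeftResolving) {D C : Set V} {θ τ : List A}
    (hD : D ∈ L.ℬ) (hθn : θ ≠ []) (hθ : L.IsLbl θ)
    (hWD : C ∩ L.wr (θ ++ τ) ⊆ L.relR D τ) :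
    C ∩ L.wr (θ ++ τ) ⊆ L.relR (D ∩ L.wr θ) τ := by
  rcases eq_or_ne τ [] with rfl | hτ
  · rw [List.append_nil] at hWD ⊢
    exact Set.subset_inter hWD Set.inter_subset_right
  · rw [show L.relR (D ∩ L.wr θ) τ = L.relR D τ ∩ L.relR (L.wr θ) τ from
      hwlr hD (L.wr_mem_ℬ hθn hθ) τ hτ, ← L.wr_append]
    exact Set.subset_inter hWD Set.inter_subset_right

theorem wtake_split {A : Type*} {w : LWord A} {n m : ℕ} (hn : (n : ℕ∞) ≤ wlen w)
    (hm : (m : ℕ∞) ≤ wlen w) {γ : List A} (hpre : wtake w m = wtake w n ++ γ) :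
    n ≤ m ∧ γ = (wtake w m).drop n := by
  have hlm := length_wtake hm
  have hln := length_wtake hn
  have h1 : n ≤ m := by
    have := congrArg List.length hpre
    rw [hlm, List.length_append, hln] at this
    omega
  refine ⟨h1, ?_⟩
  have h2 := congrArg (List.drop n) hpre
  rw [List.drop_append_of_le_length (le_of_eq hln.symm),
    List.drop_eq_nil_of_le (le_of_eq hln), List.nil_append] at h2
  exact h2.symm

end LabelledSpace

section
variable {V Edg A : Type*} (L : LabelledSpace V Edg A)

/-- (i) `T_{(αβ)γ} ⊆ T_{(β)γ}` and (ii) `G_{(αβ)γ} = G_{(α)βγ} ∘ G_{(β)γ}` on `T_{(αβ)γ}`. -/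
theorem Gmap_comp (hwlr : L.WeaklyLeftResolving)
    (hc : L.ClosedUnderRelComplements)
    (α β : List A) (hα : α ≠ []) (hβ : β ≠ []) (hαβl : L.IsLbl (α ++ β))
    (w : LWord A) (hw : L.IsLWord w) (hαβw : L.IsLWord (wappend (α ++ β) w)) :
    L.TwP (α ++ β) w ⊆ L.TwP β w ∧
    ∀ ξ ∈ L.TwP (α ++ β) w,
      L.Gmap (α ++ β) w ξ = L.Gmap α (wappend β w) (L.Gmap β w ξ) := by
  classical
  have hβlbl : L.IsLbl β := LGraph.IsLbl.infix _ hαβl ⟨α, [], by simp⟩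
  have ha1 : 1 ≤ α.length := List.length_pos_iff.mpr hα
  have hb1 : 1 ≤ β.length := List.length_pos_iff.mpr hβ
  have hpart1 : L.TwP (α ++ β) w ⊆ L.TwP β w := by
    rw [L.TwP_ne (by simp [hα]) w, L.TwP_ne hβ w]
    rintro ξ ⟨hTw, hUF, hR⟩
    refine ⟨hTw, hUF, ?_⟩
    exact hUF.1.2.2.2.1 _ hR (L.wr β)
      ⟨L.wr_mem_ℬ hβ hβlbl, by rw [L.wr_nil]; exact Set.subset_univ _⟩ (L.wr_suffix α β)
  refine ⟨hpart1, ?_⟩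
  intro ξ hξ
  rw [L.TwP_ne (by simp [hα]) w] at hξ
  obtain ⟨hTw, hUF, hR⟩ := hξ
  obtain ⟨hTight, F₀, hF₀, hξeq⟩ := hTw
  -- recovery of the complete family
  have hfil₀ : ∀ n : ℕ, (n : ℕ∞) ≤ wlen w → ∀ X, X ∈ F₀ n →
      IsFilterIn (L.Bw (wtake w n)) (F₀ n) := by
    intro n hn X hX
    rcases Nat.eq_zero_or_pos n with rfl | hn0
    · rcases hF₀.2.1 with h0 | h0
      · rw [wtake_zero]; exact h0
      · rw [h0] at hX; exact absurd hX (Set.notMem_empty _)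
    · exact hF₀.1 n hn0 hn
  have hrec : ∀ n : ℕ, (n : ℕ∞) ≤ wlen w → L.xiN w ξ n = F₀ n := by
    intro n hn
    ext X
    constructor
    · intro h
      have h' : some (wtake w n, X) ∈ ξ := h
      rw [hξeq] at h'
      exact L.xiN_recover_mem hw hF₀ hn h'
    · intro h
      have h' : some (wtake w n, X) ∈ L.filterOf w F₀ :=
        L.mem_filterOf_self (hfil₀ n hn X h) hn h
      show some (wtake w n, X) ∈ ξ
      rw [hξeq]; exact h'
  set F : ℕ → Set (Set V) := L.xiN w ξ with hFdef
  have hFfil : ∀ n : ℕ, (n : ℕ∞) ≤ wlen w → IsFilterIn (L.Bw (wtake w n)) (F n) := by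
    intro n hn
    rcases Nat.eq_zero_or_pos n with rfl | hn0
    · rw [wtake_zero]; exact hUF.1
    · rw [hrec n hn]; exact hF₀.1 n hn0 hn
  have hprop : ∀ n : ℕ, (n : ℕ∞) ≤ wlen w → L.wr ((α ++ β) ++ wtake w n) ∈ F n := by
    intro n hn
    have h0 : L.wr (α ++ β) ∈ F₀ 0 := by rw [← hrec 0 zero_le]; exact hR
    have h1 := L.propagate hF₀ h0 n hn
    rw [← L.wr_append] at h1
    rw [hrec n hn]; exact h1
  have hFinter : ∀ n : ℕ, (n : ℕ∞) ≤ wlen w → ∀ C ∈ F n,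
      C ∩ L.wr ((α ++ β) ++ wtake w n) ∈ F n :=
    fun n hn C hC => LabelledSpace.IsFilterIn.inter_mem' L (hFfil n hn) hC (hprop n hn)
  -- words
  have hune : wappend β w ≠ Sum.inl [] := by
    cases w with
    | inl l => simp [wappend, hβ]
    | inr f => simp [wappend]
  have hww : wappend α (wappend β w) = wappend (α ++ β) w := wappend_wappend α β w
  have hwlenw' : wlen (wappend (α ++ β) w) = ((α.length + β.length : ℕ) : ℕ∞) + wlen w := by
    rw [wlen_wappend]; congr 1; rw [List.length_append]
  have hwlenu : wlen (wappend β w) = ((β.length : ℕ) : ℕ∞) + wlen w := wlen_wappend β w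
  have hwtw' : ∀ n₀ : ℕ, wtake (wappend (α ++ β) w) (α.length + β.length + n₀) =
      (α ++ β) ++ wtake w n₀ := by
    intro n₀
    have hidx : α.length + β.length + n₀ - (α ++ β).length = n₀ := by
      rw [List.length_append]; omega
    rw [wtake_wappend_ge (by rw [List.length_append]; omega), hidx]
  have hwtw'le : ∀ n : ℕ, n ≤ α.length + β.length →
      wtake (wappend (α ++ β) w) n = (α ++ β).take n := fun n hn =>
    wtake_wappend_le (by rw [List.length_append]; omega) w
  have hwtu : ∀ m : ℕ, wtake (wappend β w) (β.length + m) = β ++ wtake w m := by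
    intro m
    have hidx : β.length + m - β.length = m := by omega
    rw [wtake_wappend_ge (by omega), hidx]
  have hwtule : ∀ m : ℕ, m ≤ β.length → wtake (wappend β w) m = β.take m := fun m hm =>
    wtake_wappend_le hm w
  have hwtw'a : ∀ m : ℕ, wtake (wappend (α ++ β) w) (α.length + m) = α ++ wtake (wappend β w) m := by
    intro m
    have hidx : α.length + m - α.length = m := by omega
    rw [← hww, wtake_wappend_ge (by omega), hidx]
  have hwtw'ale : ∀ n : ℕ, n ≤ α.length →
      wtake (wappend (α ++ β) w) n = α.take n := by
    intro n hn
    rw [← hww, wtake_wappend_le hn]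
  -- ℬ facts
  have hwrB : ∀ n₀ : ℕ, L.wr ((α ++ β) ++ wtake w n₀) ∈ L.ℬ := by
    intro n₀
    refine L.wr_mem_ℬ (by simp [hα]) ?_
    have h1 := L.isLbl_wtake hαβw (α.length + β.length + n₀)
    rwa [hwtw' n₀] at h1
  have hsubαβ : ∀ n₀ : ℕ, L.wr ((α ++ β) ++ wtake w n₀) ⊆ L.wr (β ++ wtake w n₀) := by
    intro n₀
    rw [List.append_assoc]
    exact L.wr_suffix α _
  -- unfold the goal
  show L.filterOf (wappend (α ++ β) w) (L.Jfamily (α ++ β) w (L.xiN w ξ)) =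
    L.filterOf (wappend α (wappend β w))
      (L.Jfamily α (wappend β w) (L.xiN (wappend β w) (L.Gmap β w ξ)))
  rw [hww]
  set u : LWord A := wappend β w with hudef
  set JB : ℕ → Set (Set V) := L.Jfamily β w F with hJBdef
  set η : Set (Option (List A × Set V)) := L.filterOf u JB with hηdef
  have hGβ : L.Gmap β w ξ = η := rfl
  rw [hGβ]
  set F' : ℕ → Set (Set V) := L.xiN u η with hF'def
  set J1 : ℕ → Set (Set V) := L.Jfamily (α ++ β) w F with hJ1def
  set K : ℕ → Set (Set V) := L.Jfamily α u F' with hKdef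
  -- the shape parameter e
  obtain ⟨e, he1, hewlen, hJ1s, hJ1d, hJBs, hJBd⟩ :
      ∃ e : ℕ, e ≤ 1 ∧ ((e : ℕ∞) ≤ wlen w) ∧
        (∀ n : ℕ, n < α.length + β.length + e →
          J1 n = L.fmap ((α ++ β).take n) ((α ++ β).drop n ++ wtake w e)
            (L.gmap (α ++ β) (wtake w e) (F e))) ∧
        (∀ n₀ : ℕ, e ≤ n₀ → (n₀ : ℕ∞) ≤ wlen w →
          J1 (α.length + β.length + n₀) = L.gmap (α ++ β) (wtake w n₀) (F n₀)) ∧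
        (∀ k : ℕ, k < β.length + e →
          JB k = L.fmap (β.take k) (β.drop k ++ wtake w e)
            (L.gmap β (wtake w e) (F e))) ∧
        (∀ k₀ : ℕ, e ≤ k₀ → (k₀ : ℕ∞) ≤ wlen w →
          JB (β.length + k₀) = L.gmap β (wtake w k₀) (F k₀)) := by
    by_cases hwnil : w = Sum.inl []
    · subst hwnil
      have hwt0 : ∀ n₀ : ℕ, wtake (Sum.inl [] : LWord A) n₀ = ([] : List A) := by
        intro n₀; show List.take n₀ ([] : List A) = []; exact List.take_nil
      have hn0 : ∀ n₀ : ℕ, ((n₀ : ℕ∞) ≤ wlen (Sum.inl [] : LWord A)) → n₀ = 0 := by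
        intro n₀ h
        have h' : (n₀ : ℕ∞) ≤ ((0 : ℕ) : ℕ∞) := by simpa [wlen] using h
        have h'' : n₀ ≤ 0 := by exact_mod_cast h'
        omega
      refine ⟨0, by omega, by simp [wlen], ?_, ?_, ?_, ?_⟩
      · intro n hn
        rw [hJ1def, L.Jfamily_nil]
        simp only
        rw [if_pos (by rw [List.length_append]; omega), hwt0 0, List.append_nil]
      · intro n₀ _ hn₀
        rw [hn0 n₀ hn₀, hJ1def, L.Jfamily_nil]
        simp only
        rw [if_neg (by rw [List.length_append]; omega), hwt0 0]
      · intro k hk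
        rw [hJBdef, L.Jfamily_nil]
        simp only
        rw [if_pos (by omega), hwt0 0, List.append_nil]
      · intro k₀ _ hk₀
        rw [hn0 k₀ hk₀, hJBdef, L.Jfamily_nil]
        simp only
        rw [if_neg (by omega), hwt0 0]
    · refine ⟨1, le_rfl, one_le_wlen hwnil, ?_, ?_, ?_, ?_⟩
      · intro n hn
        rw [hJ1def, L.Jfamily_ne hwnil]
        simp only
        rw [if_pos (by rw [List.length_append]; omega)]
      · intro n₀ hn₀ _
        have hidx : α.length + β.length + n₀ - (α ++ β).length = n₀ := by
          rw [List.length_append]; omega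
        rw [hJ1def, L.Jfamily_ne hwnil]
        simp only
        rw [if_neg (by rw [List.length_append]; omega), hidx]
      · intro k hk
        rw [hJBdef, L.Jfamily_ne hwnil]
        simp only
        rw [if_pos (by omega)]
      · intro k₀ hk₀ _
        have hidx : β.length + k₀ - β.length = k₀ := by omega
        rw [hJBdef, L.Jfamily_ne hwnil]
        simp only
        rw [if_neg (by omega), hidx]
  have hKs : ∀ i : ℕ, i ≤ α.length →
      K i = L.fmap (α.take i) (α.drop i ++ wtake u 1) (L.gmap α (wtake u 1) (F' 1)) := by
    intro i hi
    rw [hKdef, L.Jfamily_ne hune]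
    simp only
    rw [if_pos hi]
  have hKd : ∀ m : ℕ, 1 ≤ m → K (α.length + m) = L.gmap α (wtake u m) (F' m) := by
    intro m hm
    have hidx : α.length + m - α.length = m := by omega
    rw [hKdef, L.Jfamily_ne hune]
    simp only
    rw [if_neg (by omega), hidx]
  -- deep generators of J1 are K-generators
  have deep1 : ∀ n₀ : ℕ, e ≤ n₀ → (n₀ : ℕ∞) ≤ wlen w →
      ∀ X ∈ L.gmap (α ++ β) (wtake w n₀) (F n₀), X ∈ K (α.length + β.length + n₀) := by
    intro n₀ he0 hn₀ X hX
    obtain ⟨C, hC, rfl⟩ := hX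
    rw [show α.length + β.length + n₀ = α.length + (β.length + n₀) from by omega,
      hKd (β.length + n₀) (by omega)]
    have hXF : C ∩ L.wr ((α ++ β) ++ wtake w n₀) ∈ F n₀ := hFinter n₀ hn₀ C hC
    refine ⟨C ∩ L.wr ((α ++ β) ++ wtake w n₀), ?_, ?_⟩
    · show some (wtake u (β.length + n₀), C ∩ L.wr ((α ++ β) ++ wtake w n₀)) ∈ η
      have hXB : C ∩ L.wr ((α ++ β) ++ wtake w n₀) ∈ L.Bw (wtake u (β.length + n₀)) := by
        rw [hudef, hwtu n₀]
        exact ⟨L.inter_mem ((hFfil n₀ hn₀).1 hC).1 (hwrB n₀),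
          Set.inter_subset_right.trans (hsubαβ n₀)⟩
      rw [hηdef]
      refine ⟨⟨hXB, fun h => (hFfil n₀ hn₀).2.2.1 (h ▸ hXF)⟩, β.length + n₀, ?_,
        C ∩ L.wr ((α ++ β) ++ wtake w n₀), ?_, L.ESle_refl _⟩
      · rw [hudef, hwlenu]; exact cast_add_le_wlen hn₀
      · rw [hJBd n₀ he0 hn₀]
        refine ⟨C ∩ L.wr ((α ++ β) ++ wtake w n₀), hXF, ?_⟩
        exact (Set.inter_eq_left.mpr (Set.inter_subset_right.trans (hsubαβ n₀))).symm
    · rw [hudef, hwtu n₀, ← List.append_assoc]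
      exact (Set.inter_eq_left.mpr Set.inter_subset_right).symm
  -- deep K-generators dominate J1-generators
  have deep2 : ∀ m : ℕ, 1 ≤ m → (m : ℕ∞) ≤ wlen u → ∀ Z ∈ K (α.length + m),
      ∃ j : ℕ, (j : ℕ∞) ≤ wlen (wappend (α ++ β) w) ∧ ∃ W ∈ J1 j,
        L.ESle (some (wtake (wappend (α ++ β) w) j, W))
          (some (wtake (wappend (α ++ β) w) (α.length + m), Z)) := by
    intro m hm1 hmu Z hZ
    rw [hKd m hm1] at hZ
    obtain ⟨D, hD, rfl⟩ := hZ
    rw [hF'def] at hD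
    obtain ⟨⟨hDB, hDne⟩, k, hk, Y, hY, γ, hpre, hsubD⟩ := hD
    have hpre' : wtake u k = wtake u m ++ γ := hpre
    obtain ⟨hmk, hγ⟩ := LabelledSpace.wtake_split hmu hk hpre'
    have hθlbl : L.IsLbl (α ++ wtake u m) := by
      have h1 := L.isLbl_wtake hαβw (α.length + m)
      rwa [hwtw'a m] at h1
    have hθne : α ++ wtake u m ≠ [] := by simp [hα]
    by_cases hcase : k < β.length + e
    · -- shallow JB
      rw [hJBs k hcase] at hY
      obtain ⟨hYB, hYrel⟩ := hY
      obtain ⟨C, hC, hCeq⟩ := hYrel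
      have hkb : k ≤ β.length := by omega
      have hmb : m ≤ β.length := le_trans hmk hkb
      have hword1 : (α ++ wtake u m) ++ (β.drop m ++ wtake w e) = (α ++ β) ++ wtake w e := by
        rw [hudef, hwtule m hmb, List.append_assoc, ← List.append_assoc (β.take m),
          List.take_append_drop, ← List.append_assoc]
      have hγβ : γ = (β.take k).drop m := by rw [hγ, hudef, hwtule k hkb]
      have hdropid : γ ++ (β.drop k ++ wtake w e) = β.drop m ++ wtake w e := by
        rw [← List.append_assoc, hγβ]
        congr 1
        have h2 := congrArg (List.drop m) (List.take_append_drop k β)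
        rwa [List.drop_append_of_le_length (by rw [List.length_take]; omega)] at h2
      have hWD : C ∩ L.wr ((α ++ wtake u m) ++ (β.drop m ++ wtake w e)) ⊆
          L.relR D (β.drop m ++ wtake w e) := by
        rw [hword1]
        refine Set.Subset.trans (Set.inter_subset_inter_right _ (hsubαβ e)) ?_
        rw [← hCeq]
        refine Set.Subset.trans (L.relR_mono₂ hsubD _) ?_
        rw [L.relR_append₂, hdropid]
      have hfin := L.sub_relR_inter hwlr hDB.1 hθne hθlbl hWD
      refine ⟨α.length + β.length + e, ?_, C ∩ L.wr ((α ++ β) ++ wtake w e), ?_, ?_⟩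
      · rw [hwlenw']; exact cast_add_le_wlen hewlen
      · rw [hJ1d e le_rfl hewlen]; exact ⟨C, hC, rfl⟩
      · refine ⟨β.drop m ++ wtake w e, ?_, ?_⟩
        · show wtake (wappend (α ++ β) w) (α.length + β.length + e) =
            wtake (wappend (α ++ β) w) (α.length + m) ++ (β.drop m ++ wtake w e)
          rw [hwtw' e, hwtw'a m, ← hword1]
        · rw [hword1] at hfin
          exact hfin
    · -- deep JB
      push_neg at hcase
      have hkb : β.length ≤ k := by omega
      have hk₀w : ((k - β.length : ℕ) : ℕ∞) ≤ wlen w := by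
        rw [hudef, hwlenu] at hk; exact cast_le_wlen_sub hk
      rw [show k = β.length + (k - β.length) from by omega,
        hJBd (k - β.length) (by omega) hk₀w] at hY
      obtain ⟨C, hC, rfl⟩ := hY
      have hwtuk : wtake u k = β ++ wtake w (k - β.length) := by
        rw [hudef, wtake_wappend_ge hkb]
      have hword2 : (α ++ wtake u m) ++ γ = (α ++ β) ++ wtake w (k - β.length) := by
        rw [List.append_assoc, ← hpre', hwtuk, ← List.append_assoc]
      have hWD : C ∩ L.wr ((α ++ wtake u m) ++ γ) ⊆ L.relR D γ := by
        rw [hword2]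
        exact Set.Subset.trans
          (Set.inter_subset_inter_right _ (hsubαβ (k - β.length))) hsubD
      have hfin := L.sub_relR_inter hwlr hDB.1 hθne hθlbl hWD
      refine ⟨α.length + k, ?_, C ∩ L.wr ((α ++ β) ++ wtake w (k - β.length)), ?_, ?_⟩
      · rw [← hww, wlen_wappend]; exact cast_add_le_wlen hk
      · rw [show α.length + k = α.length + β.length + (k - β.length) from by omega,
          hJ1d (k - β.length) (by omega) hk₀w]
        exact ⟨C, hC, rfl⟩
      · refine ⟨γ, ?_, ?_⟩
        · show wtake (wappend (α ++ β) w) (α.length + k) =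
            wtake (wappend (α ++ β) w) (α.length + m) ++ γ
          rw [hwtw'a k, hwtw'a m, hpre', List.append_assoc]
        · rw [hword2] at hfin
          exact hfin
  -- conclude by mutual domination
  apply Set.Subset.antisymm
  · apply L.filterOf_subset_of_dominated
    intro n hn X hX
    by_cases hsh : n < α.length + β.length + e
    · rw [hJ1s n hsh] at hX
      obtain ⟨hXB, hXrel⟩ := hX
      refine ⟨α.length + β.length + e, ?_, L.relR X ((α ++ β).drop n ++ wtake w e),
        deep1 e le_rfl hewlen _ hXrel, ?_⟩
      · rw [hwlenw']; exact cast_add_le_wlen hewlen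
      · refine ⟨(α ++ β).drop n ++ wtake w e, ?_, fun v hv => hv⟩
        show wtake (wappend (α ++ β) w) (α.length + β.length + e) =
          wtake (wappend (α ++ β) w) n ++ ((α ++ β).drop n ++ wtake w e)
        rw [hwtw' e, hwtw'le n (by omega), ← List.append_assoc, List.take_append_drop]
    · push_neg at hsh
      have hn₀ : ((n - (α.length + β.length) : ℕ) : ℕ∞) ≤ wlen w := by
        rw [hwlenw'] at hn; exact cast_le_wlen_sub hn
      refine ⟨n, hn, X, ?_, L.ESle_refl _⟩
      rw [show n = α.length + β.length + (n - (α.length + β.length)) from by omega] at hX ⊢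
      rw [hJ1d _ (by omega) hn₀] at hX
      exact deep1 _ (by omega) hn₀ X hX
  · apply L.filterOf_subset_of_dominated
    intro n hn X hX
    by_cases hna : n ≤ α.length
    · rw [hKs n hna] at hX
      obtain ⟨hXB, hXrel⟩ := hX
      have hW : L.relR X (α.drop n ++ wtake u 1) ∈ K (α.length + 1) := by
        rw [hKd 1 le_rfl]; exact hXrel
      obtain ⟨j, hj, W, hWJ, hle⟩ := deep2 1 le_rfl
        (by exact_mod_cast one_le_wlen hune) _ hW
      refine ⟨j, hj, W, hWJ, L.ESle_trans hle ?_⟩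
      refine ⟨α.drop n ++ wtake u 1, ?_, fun v hv => hv⟩
      show wtake (wappend (α ++ β) w) (α.length + 1) =
        wtake (wappend (α ++ β) w) n ++ (α.drop n ++ wtake u 1)
      rw [hwtw'a 1, hwtw'ale n hna, ← List.append_assoc, List.take_append_drop]
    · push_neg at hna
      have hn' : (n : ℕ∞) ≤ (α.length : ℕ∞) + wlen u := by
        rw [← hww, wlen_wappend] at hn; exact hn
      have hmu : ((n - α.length : ℕ) : ℕ∞) ≤ wlen u := cast_le_wlen_sub hn'
      have hX' : X ∈ K (α.length + (n - α.length)) := by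
        rw [show α.length + (n - α.length) = n from by omega]; exact hX
      obtain ⟨j, hj, W, hWJ, hle⟩ := deep2 (n - α.length) (by omega) hmu X hX'
      refine ⟨j, hj, W, hWJ, ?_⟩
      rwa [show α.length + (n - α.length) = n from by omega] at hle

end
end
end
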